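/- arXiv:1710.03117 — 2 statements merged into one kernel-verified Lean document; each statement's English description precedes it below -/
import Mathlib

section
/- There exist a constant a > 0 and a non-decreasing function d : ℕ × ℕ → ℕ with d(ℓ,n) ≤ a·ℓ·log₂(n+1) for all ℓ, n ≥ 1, such that for every finite simple graph G on n vertices and all integers ℓ, m₀ ≥ 1, writing d = d(ℓ,n), at least one of the following holds: (i) G contains an m₀-bounded model of K_{m₀} of depth d; or (ii) there exist disjoint sets C, M ⊆ V(G) such that C ∪ M is a balanced separator in G, |C| ≤ n/ℓ, and for some m ≤ min(m₀, ω_d(G)), M is the support of a min(m₀, ω_d(G))-bounded model of K_m of depth d in G. -/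
open scoped Classical

universe u

/-- `C` is a balanced separator in `G`: every connected component of `G - C`
has at most `(2/3)|V(G)|` vertices. -/
def IsBalancedSeparator {V : Type u} (G : SimpleGraph V) (C : Set V) : Prop :=
  ∀ K : (G.induce Cᶜ).ConnectedComponent, 3 * K.supp.ncard ≤ 2 * Nat.card V

/-- A model of the clique `K_m` of depth `d` in `G`. -/
structure CliqueModel {V : Type u} (G : SimpleGraph V) (m d : ℕ) where
  B : Fin m → Set V
  disj : ∀ i j : Fin m, i ≠ j → Disjoint (B i) (B j)
  conn : ∀ i, (G.induce (B i)).Connected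
  rad : ∀ i, ∃ v : B i, ∀ u : B i, (G.induce (B i)).dist v u ≤ d
  adj : ∀ i j : Fin m, i < j → ∃ u ∈ B i, ∃ v ∈ B j, G.Adj u v

/-- The support of a clique model. -/
def CliqueModel.support {V : Type u} {G : SimpleGraph V} {m d : ℕ}
    (M : CliqueModel G m d) : Set V := ⋃ i, M.B i

/-- An `m₀`-bounded model: each branch set has at most `m₀ * d` vertices. -/
def CliqueModel.Bounded {V : Type u} {G : SimpleGraph V} {m d : ℕ}
    (M : CliqueModel G m d) (m₀ : ℕ) : Prop := ∀ i, (M.B i).ncard ≤ m₀ * d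

/-- `ω_d(G)`: the maximum `m` such that `G` contains a model of `K_m` of depth `d`. -/
noncomputable def omegaDepth {V : Type u} (G : SimpleGraph V) (d : ℕ) : ℕ :=
  sSup {m | Nonempty (CliqueModel G m d)}

/-- Membership in the class `𝒢_{c,ε}`: every subgraph `H` of `G` has a
balanced separator of order at most `c * |V(H)|^(1-ε)`. -/
def MemGSep {V : Type u} (G : SimpleGraph V) (c ε : ℝ) : Prop :=
  ∀ (S : Set V) (H : SimpleGraph S), H ≤ G.induce S →
    ∃ C : Set S, IsBalancedSeparator H C ∧ (C.ncard : ℝ) ≤ c * (S.ncard : ℝ) ^ (1 - ε)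

/-- A model of a graph `H` of depth `r` in `G` (witnessing that `H` is obtained from a
subgraph of `G` by contracting vertex-disjoint subgraphs of radius at most `r`). -/
structure MinorModel {V : Type u} {W : Type w} (G : SimpleGraph V) (H : SimpleGraph W)
    (r : ℕ) where
  B : W → Set V
  disj : ∀ i j : W, i ≠ j → Disjoint (B i) (B j)
  conn : ∀ i, (G.induce (B i)).Connected
  rad : ∀ i, ∃ v : B i, ∀ u : B i, (G.induce (B i)).dist v u ≤ r
  adj : ∀ i j : W, H.Adj i j → ∃ u ∈ B i, ∃ v ∈ B j, G.Adj u v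

/-- `∇_r(G)`: the maximum average degree of a graph obtained from a subgraph of `G`
by contracting vertex-disjoint subgraphs of radius at most `r`. -/
noncomputable def nabla {V : Type u} (G : SimpleGraph V) (r : ℕ) : ℝ :=
  sSup { x | ∃ (m : ℕ) (H : SimpleGraph (Fin m)), 0 < m ∧ Nonempty (MinorModel G H r) ∧
    x = 2 * (H.edgeSet.ncard : ℝ) / m }

/-- A tree decomposition of `G`. -/
structure TreeDecomp {V : Type u} (G : SimpleGraph V) where
  ι : Type u
  T : SimpleGraph ι
  tree : T.IsTree
  bag : ι → Set V
  hedge : ∀ u v : V, G.Adj u v → ∃ z, u ∈ bag z ∧ v ∈ bag z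
  hvert : ∀ v : V, (T.induce {z | v ∈ bag z}).Connected

/-- `G` has treewidth at most `k`. -/
def TreewidthLE {V : Type u} (G : SimpleGraph V) (k : ℕ) : Prop :=
  ∃ D : TreeDecomp G, ∀ z, (D.bag z).ncard ≤ k + 1

/-- `coTW_k(G)`: sets of vertices whose removal brings the treewidth down to at most `k`. -/
def coTW {V : Type u} (G : SimpleGraph V) (k : ℕ) : Set (Set V) :=
  { X | TreewidthLE (G.induce Xᶜ) k }

/-- An `ε`-thin (finitely supported) probability distribution on a collection `𝒳`
of subsets of the vertex set. -/
structure ThinDist {V : Type u} (𝒳 : Set (Set V)) (ε : ℝ) where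
  supp : Finset (Set V)
  p : Set V → ℝ
  nonneg : ∀ X, 0 ≤ p X
  mem : ∀ X ∈ supp, X ∈ 𝒳
  zero_outside : ∀ X ∉ supp, p X = 0
  total : ∑ X ∈ supp, p X = 1
  thin : ∀ v : V, ∑ X ∈ supp, (if v ∈ X then p X else 0) ≤ ε

set_option linter.unusedSectionVars false
set_option linter.unusedVariables false

namespace PRS

variable {V : Type} [Fintype V] (G : SimpleGraph V)

/-- One step of adjacency inside a set `A`. -/
def rel (A : Set V) (x y : V) : Prop := x ∈ A ∧ y ∈ A ∧ G.Adj x y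

/-- The connected component of `u` inside the vertex set `A`. -/
def comp (A : Set V) (u : V) : Set V :=
  {x | Relation.ReflTransGen (rel G A) u x ∧ x ∈ A}

/-- Ball of radius `n` around `u` inside the vertex set `A`. -/
def ball (A : Set V) (u : V) : ℕ → Set V
  | 0 => {u}
  | n+1 => ball A u n ∪ {x | x ∈ A ∧ ∃ y ∈ ball A u n, G.Adj y x}

variable {G}

lemma rel_symm (A : Set V) : Symmetric (rel G A) := by
  rintro x y ⟨hx, hy, hadj⟩; exact ⟨hy, hx, hadj.symm⟩

lemma reach_symm (A : Set V) {x y : V} (h : Relation.ReflTransGen (rel G A) x y) :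
    Relation.ReflTransGen (rel G A) y x := by
  letI : Std.Symm (rel G A) := ⟨fun a b h => rel_symm A h⟩
  exact symm_of _ h

lemma mem_ball_self (A : Set V) (u : V) (n : ℕ) : u ∈ ball G A u n := by
  induction n with
  | zero => simp [ball]
  | succ n ih => exact Or.inl ih

lemma ball_succ (A : Set V) (u : V) (n : ℕ) :
    ball G A u n ⊆ ball G A u (n+1) := fun x hx => Or.inl hx

lemma ball_mono_nat (A : Set V) (u : V) {m n : ℕ} (h : m ≤ n) :
    ball G A u m ⊆ ball G A u n := by
  induction h with
  | refl => exact subset_rfl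
  | step _ ih => exact ih.trans (ball_succ A u _)

lemma ball_mono_set {A A' : Set V} (h : A ⊆ A') (u : V) (n : ℕ) :
    ball G A u n ⊆ ball G A' u n := by
  induction n with
  | zero => exact subset_rfl
  | succ n ih =>
    rintro x (hx | ⟨hxA, y, hy, hadj⟩)
    · exact Or.inl (ih hx)
    · exact Or.inr ⟨h hxA, y, ih hy, hadj⟩

lemma ball_subset {A : Set V} {u : V} (hu : u ∈ A) (n : ℕ) :
    ball G A u n ⊆ A := by
  induction n with
  | zero => simpa [ball]
  | succ n ih =>
    rintro x (hx | ⟨hxA, _⟩)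
    · exact ih hx
    · exact hxA

lemma adj_mem_ball {A : Set V} {u x y : V} {n : ℕ}
    (hx : x ∈ ball G A u n) (hy : y ∈ A) (hadj : G.Adj x y) :
    y ∈ ball G A u (n+1) := Or.inr ⟨hy, x, hx, hadj⟩

lemma mem_comp_self {A : Set V} {u : V} (hu : u ∈ A) : u ∈ comp G A u :=
  ⟨Relation.ReflTransGen.refl, hu⟩

lemma comp_subset (A : Set V) (u : V) : comp G A u ⊆ A := fun _ h => h.2

lemma comp_mono {A A' : Set V} (h : A ⊆ A') (u : V) :
    comp G A u ⊆ comp G A' u := by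
  rintro x ⟨hreach, hx⟩
  have hm : ∀ a b, rel G A a b → rel G A' a b := fun a b ⟨ha, hb, hadj⟩ => ⟨h ha, h hb, hadj⟩
  exact ⟨Relation.ReflTransGen.mono hm u x hreach, h hx⟩

lemma comp_closure {A : Set V} {u x y : V} (hx : x ∈ comp G A u)
    (hxA : x ∈ A) (hy : y ∈ A) (hadj : G.Adj x y) : y ∈ comp G A u :=
  ⟨hx.1.tail ⟨hxA, hy, hadj⟩, hy⟩

lemma comp_eq_of_mem {A : Set V} {u x : V} (hx : x ∈ comp G A u) :
    comp G A x = comp G A u := by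
  obtain ⟨hr, hxA⟩ := hx
  ext y
  constructor
  · rintro ⟨hr2, hyA⟩; exact ⟨hr.trans hr2, hyA⟩
  · rintro ⟨hr2, hyA⟩
    exact ⟨(reach_symm A hr).trans hr2, hyA⟩

lemma ball_subset_comp {A : Set V} {u : V} (hu : u ∈ A) (n : ℕ) :
    ball G A u n ⊆ comp G A u := by
  induction n with
  | zero =>
    intro x hx; rcases hx with rfl; exact mem_comp_self hu
  | succ n ih =>
    rintro x (hx | ⟨hxA, y, hy, hadj⟩)
    · exact ih hx
    · exact comp_closure (ih hy) (comp_subset A u (ih hy)) hxA hadj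

lemma comp_subset_ball_of_stab {A : Set V} {u : V} (hu : u ∈ A) {n : ℕ}
    (hstab : ball G A u (n+1) ⊆ ball G A u n) :
    comp G A u ⊆ ball G A u n := by
  rintro x ⟨hr, hxA⟩
  induction hr with
  | refl => exact mem_ball_self A u n
  | tail _ hrel ih =>
    exact hstab (adj_mem_ball (ih hrel.1) hrel.2.1 hrel.2.2)

/-- Reach within a component implies reach inside the component itself. -/
lemma comp_subset_comp_self {A : Set V} {u : V} :
    comp G A u ⊆ comp G (comp G A u) u := by
  rintro x ⟨hr, hxA⟩
  have key : ∀ y, Relation.ReflTransGen (rel G A) u y →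
      Relation.ReflTransGen (rel G (comp G A u)) u y := by
    intro y hy
    induction hy with
    | refl => exact Relation.ReflTransGen.refl
    | @tail b c hub hrel ih =>
      have hb : b ∈ comp G A u := ⟨hub, hrel.1⟩
      have hc : c ∈ comp G A u := ⟨hub.tail hrel, hrel.2.1⟩
      exact ih.tail ⟨hb, hc, hrel.2.2⟩
  exact ⟨key x hr, ⟨hr, hxA⟩⟩

lemma comp_self {A : Set V} {u : V} (hu : u ∈ A) :
    comp G (comp G A u) u = comp G A u := by
  apply subset_antisymm
  · exact (comp_subset _ _)
  · exact comp_subset_comp_self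

/-! ### Bridges to `SimpleGraph.induce` -/

lemma exists_walk_of_mem_ball {A : Set V} {u : V} (hu : u ∈ A) :
    ∀ {n : ℕ} {x : V}, x ∈ ball G A u n →
      ∃ (hxA : x ∈ A) (w : (G.induce A).Walk ⟨u, hu⟩ ⟨x, hxA⟩), w.length ≤ n := by
  intro n
  induction n with
  | zero =>
    intro x hx
    rcases hx with rfl
    exact ⟨hu, SimpleGraph.Walk.nil, by simp⟩
  | succ n ih =>
    rintro x (hx | ⟨hxA, y, hy, hadj⟩)
    · obtain ⟨hxA, w, hw⟩ := ih hx
      exact ⟨hxA, w, hw.trans (Nat.le_succ n)⟩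
    · obtain ⟨hyA, w, hw⟩ := ih hy
      refine ⟨hxA, w.concat ?_, ?_⟩
      · exact hadj
      · exact (SimpleGraph.Walk.length_concat w _).trans_le (by omega)

lemma reach_of_walk {A : Set V} {a b : ↥A} (w : (G.induce A).Walk a b) :
    Relation.ReflTransGen (rel G A) ↑a ↑b := by
  induction w with
  | nil => exact Relation.ReflTransGen.refl
  | @cons s t u h p ih =>
    exact Relation.ReflTransGen.head ⟨s.2, t.2, h⟩ ih

lemma conn_dist_of_ball {X : Set V} {v : V} (hv : v ∈ X) {D : ℕ}
    (h : ∀ w ∈ X, w ∈ ball G X v D) :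
    (G.induce X).Connected ∧ ∃ v' : X, ∀ u : X, (G.induce X).dist v' u ≤ D := by
  have key : ∀ u : X, ∃ w : (G.induce X).Walk ⟨v, hv⟩ u, w.length ≤ D := by
    intro u
    obtain ⟨hxA, w, hw⟩ := exists_walk_of_mem_ball hv (h u.1 u.2)
    exact ⟨w.copy rfl (by ext; rfl), by simpa using hw⟩
  constructor
  · rw [SimpleGraph.connected_iff]
    refine ⟨fun a b => ((key a).choose.reachable.symm).trans (key b).choose.reachable, ⟨⟨v, hv⟩⟩⟩
  · exact ⟨⟨v, hv⟩, fun u => (SimpleGraph.dist_le (key u).choose).trans (key u).choose_spec⟩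

/-- Balancedness via `comp`. -/
lemma balanced_of_comp_small {A : Set V} {n : ℕ} (hcard : Fintype.card V = n)
    (h : ∀ w ∈ A, 3 * (comp G A w).ncard ≤ 2 * n) :
    ∀ K : (G.induce A).ConnectedComponent, 3 * K.supp.ncard ≤ 2 * Nat.card V := by
  intro K
  obtain ⟨x, hx⟩ := K.exists_rep
  have himg : K.supp.ncard = (Subtype.val '' K.supp : Set V).ncard :=
    (Set.ncard_image_of_injective _ Subtype.val_injective).symm
  have hsub : (Subtype.val '' K.supp : Set V) ⊆ comp G A ↑x := by
    rintro _ ⟨y, hy, rfl⟩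
    rw [SimpleGraph.ConnectedComponent.mem_supp_iff, ← hx] at hy
    have hreach : (G.induce A).Reachable y x := SimpleGraph.ConnectedComponent.eq.mp hy
    obtain ⟨w⟩ := hreach
    have := reach_of_walk w
    exact ⟨(reach_symm A this), y.2⟩
  have hA : (x : V) ∈ A := x.2
  rw [Nat.card_eq_fintype_card, hcard, himg]
  calc 3 * (Subtype.val '' K.supp : Set V).ncard ≤ 3 * (comp G A ↑x).ncard := by
        have := Set.ncard_le_ncard hsub (Set.toFinite _)
        omega
    _ ≤ 2 * n := h _ hA

/-! ### Clique models from lists -/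

variable (G) in
/-- Relation between branch sets : disjoint and joined by an edge. -/
def Rel2 (X Y : Set V) : Prop := Disjoint X Y ∧ ∃ a ∈ X, ∃ b ∈ Y, G.Adj a b

variable (G) in
def GoodList (l : List (Set V)) (D : ℕ) : Prop :=
  l.Pairwise (Rel2 G) ∧ ∀ X ∈ l, ∃ v ∈ X, ∀ w ∈ X, w ∈ ball G X v D

def listModel {l : List (Set V)} {D : ℕ} (h : GoodList G l D) :
    CliqueModel G l.length D where
  B i := l.get i
  disj := by
    have hget := List.pairwise_iff_get.mp h.1
    intro i j hij
    rcases lt_or_gt_of_ne hij with h' | h'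
    · exact (hget i j h').1
    · exact ((hget j i h').1).symm
  conn := by
    intro i
    obtain ⟨v, hv, hb⟩ := h.2 _ (List.get_mem l i)
    exact (conn_dist_of_ball hv hb).1
  rad := by
    intro i
    obtain ⟨v, hv, hb⟩ := h.2 _ (List.get_mem l i)
    exact (conn_dist_of_ball hv hb).2
  adj := by
    have hget := List.pairwise_iff_get.mp h.1
    intro i j hij
    exact (hget i j hij).2

/-! ### omegaDepth bounds -/

lemma model_le_card {m d : ℕ} (M : CliqueModel G m d) : m ≤ Fintype.card V := by
  have hv : ∀ i, ∃ v : V, v ∈ M.B i := by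
    intro i
    obtain ⟨v, _⟩ := M.rad i
    exact ⟨v.1, v.2⟩
  choose f hf using hv
  have hinj : Function.Injective f := by
    intro i j hij
    by_contra hne
    exact Set.disjoint_left.mp (M.disj i j hne) (hf i) (hij ▸ hf j)
  simpa using Fintype.card_le_of_injective f hinj

lemma le_omegaDepth {m d : ℕ} (h : Nonempty (CliqueModel G m d)) :
    m ≤ omegaDepth G d :=
  le_csSup ⟨Fintype.card V, fun m' (hm' : Nonempty (CliqueModel G m' d)) => model_le_card hm'.some⟩ h

/-! ### List supports -/

variable (G) in
def lsupp (l : List (Set V)) : Set V := {x | ∃ X ∈ l, x ∈ X}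

lemma lsupp_nil : lsupp (V := V) ([] : List (Set V)) = ∅ := by
  ext x; simp [lsupp]

lemma lsupp_cons (X : Set V) (l : List (Set V)) :
    lsupp (V := V) (X :: l) = X ∪ lsupp (V := V) l := by
  ext x; simp [lsupp]

lemma lsupp_mono {l₁ l₂ : List (Set V)} (h : ∀ X ∈ l₁, X ∈ l₂) :
    lsupp (V := V) l₁ ⊆ lsupp (V := V) l₂ := by
  rintro x ⟨X, hX, hx⟩; exact ⟨X, h X hX, hx⟩

lemma mem_lsupp {l : List (Set V)} {x : V} : x ∈ lsupp (V := V) l ↔ ∃ X ∈ l, x ∈ X := Iff.rfl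

lemma ncard_lsupp_le (l : List (Set V)) (c : ℕ) (h : ∀ X ∈ l, X.ncard ≤ c) :
    (lsupp (V := V) l).ncard ≤ l.length * c := by
  induction l with
  | nil => simp [lsupp_nil]
  | cons X l ih =>
    rw [lsupp_cons, List.length_cons]
    have h1 := Set.ncard_union_le X (lsupp (V := V) l)
    have h2 := ih (fun Y hY => h Y (List.mem_cons_of_mem _ hY))
    have h3 := h X List.mem_cons_self
    have h4 : (l.length + 1) * c = l.length * c + c := by ring
    omega

/-! ### Path extraction -/

lemma exists_path_set {A : Set V} {u : V} (hu : u ∈ A) :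
    ∀ {n : ℕ} {x : V}, x ∈ ball G A u n →
      ∃ P : Set V, P ⊆ A ∧ u ∈ P ∧ x ∈ P ∧ P.ncard ≤ n + 1 ∧
        ∀ w ∈ P, w ∈ ball G P u n := by
  intro n
  induction n with
  | zero =>
    intro x hx
    have hx' : x = u := hx
    refine ⟨{u}, by simpa using hu, rfl, by simp [hx'], by simp, ?_⟩
    rintro w hw
    have hw' : w = u := hw
    subst hw'
    exact mem_ball_self _ _ _
  | succ n ih =>
    rintro x (hx | ⟨hxA, y, hy, hadj⟩)
    · obtain ⟨P, hPA, huP, hxP, hcard, hball⟩ := ih hx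
      exact ⟨P, hPA, huP, hxP, hcard.trans (by omega),
        fun w hw => ball_succ _ _ _ (hball w hw)⟩
    · obtain ⟨P, hPA, huP, hyP, hcard, hball⟩ := ih hy
      refine ⟨insert x P, ?_, Set.mem_insert_of_mem _ huP, Set.mem_insert _ _, ?_, ?_⟩
      · exact Set.insert_subset hxA hPA
      · have := Set.ncard_insert_le x P
        omega
      · rintro w hw'
        rcases Set.mem_insert_iff.mp hw' with hwx | hw
        · subst hwx
          refine adj_mem_ball ?_ (Set.mem_insert _ _) hadj
          exact ball_mono_set (Set.subset_insert w P) u n (hball y hyP)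
        · exact ball_succ _ _ _ (ball_mono_set (Set.subset_insert x P) u n (hball w hw))

/-! ### Arithmetic -/

lemma doubling (x : ℕ → ℕ) (E : ℕ) (h1 : 1 ≤ x 0) (hd : ∀ k < E, 2 * x k ≤ x (k+1)) :
    2 ^ E ≤ x E := by
  induction E with
  | zero => simpa
  | succ E ih =>
    have h2 := hd E (Nat.lt_succ_self E)
    have h3 := ih (fun k hk => hd k (hk.trans (Nat.lt_succ_self E)))
    have : 2 ^ (E+1) = 2 * 2 ^ E := by ring
    omega

lemma sum_decomp_b (b d : ℕ → ℕ) (hstep : ∀ j, b (j+1) = b j + d j) (j t : ℕ) :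
    b (j + t) = b j + ∑ s ∈ Finset.range t, d (j + s) := by
  induction t with
  | zero => simp
  | succ t ih =>
    have h1 : j + (t+1) = (j + t) + 1 := by ring
    rw [h1, hstep (j + t), ih, Finset.sum_range_succ]
    ring

lemma sum_decomp_T (T d : ℕ → ℕ) (hstep : ∀ j, T j = T (j+1) + d j) (j t : ℕ) :
    T j = T (j + t) + ∑ s ∈ Finset.range t, d (j + s) := by
  induction t with
  | zero => simp
  | succ t ih =>
    have h1 : j + (t+1) = (j + t) + 1 := by ring
    rw [ih, Finset.sum_range_succ, h1, hstep (j + t)]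
    ring

lemma b_mono (b d : ℕ → ℕ) (hstep : ∀ j, b (j+1) = b j + d j) {s t : ℕ} (h : s ≤ t) :
    b s ≤ b t := by
  induction h with
  | refl => exact le_rfl
  | @step m _ ih =>
    show b s ≤ b (m+1)
    have := hstep m; omega

lemma T_anti (T d : ℕ → ℕ) (hstep : ∀ j, T j = T (j+1) + d j) {s t : ℕ} (h : s ≤ t) :
    T t ≤ T s := by
  induction h with
  | refl => exact le_rfl
  | @step m _ ih =>
    show T (m+1) ≤ T s
    have := hstep m; omega

lemma growth_double (b d : ℕ → ℕ) (ℓ : ℕ) (hl : 1 ≤ ℓ)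
    (hstep : ∀ j, b (j+1) = b j + d j) (j : ℕ)
    (hg : ∀ s, j ≤ s → s < j + ℓ → b s + 1 ≤ ℓ * d s) :
    2 * b j + 1 ≤ b (j + ℓ) := by
  have hdec := sum_decomp_b b d hstep j ℓ
  have hsum : ℓ * (b j + 1) ≤ ℓ * ∑ s ∈ Finset.range ℓ, d (j + s) := by
    rw [Finset.mul_sum]
    calc ℓ * (b j + 1) = ∑ _s ∈ Finset.range ℓ, (b j + 1) := by
          rw [Finset.sum_const, Finset.card_range]; ring
      _ ≤ ∑ s ∈ Finset.range ℓ, ℓ * d (j + s) := by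
          apply Finset.sum_le_sum
          intro s hs
          have hs' := Finset.mem_range.mp hs
          have h1 := hg (j + s) (by omega) (by omega)
          have h2 := b_mono b d hstep (show j ≤ j + s by omega)
          omega
  have hsum' : b j + 1 ≤ ∑ s ∈ Finset.range ℓ, d (j + s) :=
    Nat.le_of_mul_le_mul_left hsum (by omega)
  omega

lemma halving_double (T d : ℕ → ℕ) (ℓ : ℕ) (hl : 1 ≤ ℓ)
    (hstep : ∀ j, T j = T (j+1) + d j) (j : ℕ)
    (hg : ∀ s, j ≤ s → s < j + ℓ → T (s+1) + 1 ≤ ℓ * d s) :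
    2 * T (j + ℓ) + 1 ≤ T j := by
  have hdec := sum_decomp_T T d hstep j ℓ
  have hsum : ℓ * (T (j + ℓ) + 1) ≤ ℓ * ∑ s ∈ Finset.range ℓ, d (j + s) := by
    rw [Finset.mul_sum]
    calc ℓ * (T (j + ℓ) + 1) = ∑ _s ∈ Finset.range ℓ, (T (j + ℓ) + 1) := by
          rw [Finset.sum_const, Finset.card_range]; ring
      _ ≤ ∑ s ∈ Finset.range ℓ, ℓ * d (j + s) := by
          apply Finset.sum_le_sum
          intro s hs
          have hs' := Finset.mem_range.mp hs
          have h1 := hg (j + s) (by omega) (by omega)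
          have h2 := T_anti T d hstep (show j + s + 1 ≤ j + ℓ by omega)
          omega
  have hsum' : T (j + ℓ) + 1 ≤ ∑ s ∈ Finset.range ℓ, d (j + s) :=
    Nat.le_of_mul_le_mul_left hsum (by omega)
  omega

lemma growth_main (b d : ℕ → ℕ) (ℓ E : ℕ) (hl : 1 ≤ ℓ)
    (hstep : ∀ j, b (j+1) = b j + d j) (h0 : 1 ≤ b 0)
    (hg : ∀ j < ℓ * E, b j + 1 ≤ ℓ * d j) :
    2 ^ E ≤ b (ℓ * E) := by
  have := doubling (fun k => b (ℓ * k)) E (by simpa) ?_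
  · simpa using this
  · intro k hk
    have key := growth_double b d ℓ hl hstep (ℓ * k) ?_
    · have h1 : ℓ * k + ℓ = ℓ * (k + 1) := by ring
      rw [h1] at key
      omega
    · intro s hs1 hs2
      apply hg
      have : ℓ * k + ℓ = ℓ * (k+1) := by ring
      have : ℓ * (k+1) ≤ ℓ * E := Nat.mul_le_mul_left ℓ (by omega)
      omega

lemma halving_main (T d : ℕ → ℕ) (ℓ E j₁ : ℕ) (hl : 1 ≤ ℓ)
    (hstep : ∀ j, T j = T (j+1) + d j) (hT : 1 ≤ T (j₁ + ℓ * E))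
    (hg : ∀ j, j₁ ≤ j → j < j₁ + ℓ * E → T (j+1) + 1 ≤ ℓ * d j) :
    2 ^ E ≤ T j₁ := by
  have := doubling (fun k => T (j₁ + ℓ * (E - k))) E (by simpa) ?_
  · have h0 : E - E = 0 := by omega
    simpa [h0] using this
  · intro k hk
    obtain ⟨e, he⟩ : ∃ e, E - k = e + 1 := ⟨E - k - 1, by omega⟩
    have he' : E - (k + 1) = e := by omega
    simp only [he, he']
    have key := halving_double T d ℓ hl hstep (j₁ + ℓ * e) ?_
    · have h1 : j₁ + ℓ * e + ℓ = j₁ + ℓ * (e + 1) := by ring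
      rw [h1] at key
      omega
    · intro s hs1 hs2
      apply hg
      · omega
      · have h2 : ℓ * (e + 1) ≤ ℓ * E := Nat.mul_le_mul_left ℓ (by omega)
        have h3 : ℓ * e + ℓ = ℓ * (e + 1) := by ring
        omega

lemma listModel_B {l : List (Set V)} {D : ℕ} (h : GoodList G l D) (i : Fin l.length) :
    (listModel h).B i = l.get i := rfl

lemma listModel_support {l : List (Set V)} {D : ℕ} (h : GoodList G l D) :
    (listModel h).support = lsupp (V := V) l := by
  ext x
  simp only [CliqueModel.support, Set.mem_iUnion, listModel_B, mem_lsupp]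
  constructor
  · rintro ⟨i, hi⟩; exact ⟨l.get i, List.get_mem l i, hi⟩
  · rintro ⟨X, hX, hx⟩
    obtain ⟨i, hi, rfl⟩ := List.mem_iff_get.mp hX
    exact ⟨_, hx⟩

/-! ### Ball cardinality bookkeeping -/

lemma ball_ncard_step {A : Set V} (u : V) (j : ℕ) :
    (ball G A u (j+1)).ncard =
      (ball G A u j).ncard + (ball G A u (j+1) \ ball G A u j).ncard := by
  have := Set.ncard_diff_add_ncard_of_subset (ball_succ (G := G) A u j) (Set.toFinite _)
  omega

lemma tail_ncard_step {A : Set V} {u : V} (hu : u ∈ A) (K : Set V) (hK : K = comp G A u)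
    (j : ℕ) :
    (K \ ball G K u j).ncard =
      (K \ ball G K u (j+1)).ncard + (ball G K u (j+1) \ ball G K u j).ncard := by
  have huK : u ∈ K := hK ▸ mem_comp_self hu
  have hbK : ∀ t, ball G K u t ⊆ K := fun t => ball_subset huK t
  have hset : K \ ball G K u j =
      (K \ ball G K u (j+1)) ∪ (ball G K u (j+1) \ ball G K u j) := by
    ext x
    constructor
    · rintro ⟨hxK, hxj⟩
      by_cases hx1 : x ∈ ball G K u (j+1)
      · exact Or.inr ⟨hx1, hxj⟩
      · exact Or.inl ⟨hxK, hx1⟩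
    · rintro (⟨hxK, hx1⟩ | ⟨hx1, hxj⟩)
      · exact ⟨hxK, fun h => hx1 (ball_succ _ _ _ h)⟩
      · exact ⟨hbK _ hx1, hxj⟩
  rw [hset, Set.ncard_union_eq ?_ (Set.toFinite _) (Set.toFinite _)]
  rw [Set.disjoint_left]
  rintro x ⟨_, hx1⟩ ⟨hx2, _⟩
  exact hx1 hx2

lemma tail_ncard_eq {A : Set V} {u : V} (hu : u ∈ A) (K : Set V) (hK : K = comp G A u)
    (j : ℕ) :
    (K \ ball G K u j).ncard + (ball G K u j).ncard = K.ncard := by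
  have huK : u ∈ K := hK ▸ mem_comp_self hu
  exact Set.ncard_diff_add_ncard_of_subset (ball_subset huK j) (Set.toFinite _)

/-! ### The crossing lemma -/

lemma stay_in_ball {A : Set V} {u : V} (hu : u ∈ A) (K : Set V)
    (hK : K = comp G A u) (j : ℕ)
    {x y : V}
    (hr : Relation.ReflTransGen
      (rel G (A \ (ball G K u (j+1) \ ball G K u j))) x y)
    (hx : x ∈ ball G K u j) : y ∈ ball G K u j := by
  have huK : u ∈ K := hK ▸ mem_comp_self hu
  induction hr with
  | refl => exact hx
  | @tail b c hrb hrel ih =>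
    have hb : b ∈ ball G K u j := ih
    have hbK : b ∈ K := ball_subset huK j hb
    have hcA : c ∈ A := hrel.2.1.1
    have hcL : c ∉ ball G K u (j+1) \ ball G K u j := hrel.2.1.2
    have hcK : c ∈ K := by
      rw [hK]
      exact comp_closure (hK ▸ hbK) (comp_subset A u (hK ▸ hbK)) hcA hrel.2.2
    have hc1 : c ∈ ball G K u (j+1) := adj_mem_ball hb hcK hrel.2.2
    by_cases hcj : c ∈ ball G K u j
    · exact hcj
    · exact absurd ⟨hc1, hcj⟩ hcL

/-! ### Component stability when deleting non-adjacent sets -/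

lemma comp_eq_of_no_touch {S S' : Set V} {u : V} (hsub : S' ⊆ S) (hu : u ∉ S)
    (htouch : ∀ x, x ∈ S → x ∉ S' → ¬ ∃ y ∈ comp G Sᶜ u, G.Adj x y) :
    comp G S'ᶜ u = comp G Sᶜ u := by
  apply subset_antisymm
  · rintro x ⟨hr, hxA⟩
    have key : ∀ y, Relation.ReflTransGen (rel G S'ᶜ) u y → y ∈ S'ᶜ → y ∈ comp G Sᶜ u := by
      intro y hy
      induction hy with
      | refl => intro _; exact mem_comp_self hu
      | @tail b c hub hrel ih =>
        intro _
        have hb : b ∈ comp G Sᶜ u := ih hrel.1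
        by_cases hcS : c ∈ S
        · exact absurd ⟨b, hb, hrel.2.2.symm⟩ (htouch c hcS hrel.2.1)
        · exact comp_closure hb (comp_subset _ _ hb) hcS hrel.2.2
    exact key x hr hxA
  · exact comp_mono (Set.compl_subset_compl.mpr hsub) u

/-! ### Sublist filtering -/

lemma exists_filter (p : Set V → Prop) :
    ∀ l : List (Set V), ∃ l' : List (Set V),
      l'.Sublist l ∧ (∀ X ∈ l', p X) ∧ (∀ X ∈ l, p X → X ∈ l') := by
  intro l
  induction l with
  | nil => exact ⟨[], List.Sublist.refl _, by simp, by simp⟩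
  | cons X l ih =>
    obtain ⟨l', hsub, hall, hcomplete⟩ := ih
    by_cases hpX : p X
    · refine ⟨X :: l', hsub.cons₂ X, ?_, ?_⟩
      · rintro Y hY
        rcases List.mem_cons.mp hY with rfl | hY'
        · exact hpX
        · exact hall Y hY'
      · rintro Y hY hpY
        rcases List.mem_cons.mp hY with rfl | hY
        · exact List.mem_cons_self
        · exact List.mem_cons_of_mem _ (hcomplete Y hY hpY)
    · refine ⟨l', hsub.cons X, hall, ?_⟩
      rintro Y hY hpY
      rcases List.mem_cons.mp hY with rfl | hY
      · exact absurd hpY hpX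
      · exact hcomplete Y hY hpY

/-! ### Uniqueness of big components -/

lemma big_eq {A : Set V} {u w : V} {n : ℕ} (hcard : Fintype.card V = n)
    (hu : 2 * n < 3 * (comp G A u).ncard) (hw : 2 * n < 3 * (comp G A w).ncard) :
    comp G A u = comp G A w := by
  by_contra hne
  have hdisj : Disjoint (comp G A u) (comp G A w) := by
    rw [Set.disjoint_left]
    intro z hzu hzw
    exact hne ((comp_eq_of_mem hzu).symm.trans (comp_eq_of_mem hzw))
  have hun : (comp G A u ∪ comp G A w).ncard =
      (comp G A u).ncard + (comp G A w).ncard :=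
    Set.ncard_union_eq hdisj (Set.toFinite _) (Set.toFinite _)
  have hle : (comp G A u ∪ comp G A w).ncard ≤ n := by
    have h1 : (comp G A u ∪ comp G A w).ncard ≤ (Set.univ : Set V).ncard :=
      Set.ncard_le_ncard (Set.subset_univ _) (Set.toFinite _)
    rwa [Set.ncard_univ, Nat.card_eq_fintype_card, hcard] at h1
  omega

/-! ### Goal and terminal steps -/

variable (G) in
def Goal (n ℓ m₀ D : ℕ) : Prop :=
  (∃ M : CliqueModel G m₀ D, M.Bounded m₀) ∨
  (∃ (C M : Finset V) (m : ℕ) (Mod : CliqueModel G m D),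
    Disjoint C M ∧
    IsBalancedSeparator G (↑C ∪ ↑M) ∧
    (C.card : ℝ) ≤ (n : ℝ) / ℓ ∧
    m ≤ min m₀ (omegaDepth G D) ∧
    Mod.support = ↑M ∧
    Mod.Bounded (min m₀ (omegaDepth G D)))

lemma goal_left {n ℓ m₀ D : ℕ} {l : List (Set V)} (hGL : GoodList G l D)
    (hlen : l.length = m₀) (hsz : ∀ X ∈ l, X.ncard ≤ m₀ * D) :
    Goal G n ℓ m₀ D := by
  subst hlen
  exact Or.inl ⟨listModel hGL, fun i => hsz _ (List.get_mem l i)⟩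

lemma terminal2 {n ℓ m₀ D : ℕ} (hcard : Fintype.card V = n) (hl : 1 ≤ ℓ)
    (C : Set V) (l : List (Set V)) (mstar : ℕ)
    (hgood : GoodList G l D)
    (hdisjC : ∀ X ∈ l, Disjoint X C)
    (hsize : ∀ X ∈ l, X.ncard ≤ mstar * D)
    (hlen : l.length ≤ m₀)
    (hms : mstar ≤ m₀)
    (hwit : Nonempty (CliqueModel G mstar D))
    (hbud : ℓ * C.ncard ≤ n)
    (hsmall : ∀ w, w ∉ C ∪ lsupp (V := V) l →
      3 * (comp G (C ∪ lsupp (V := V) l)ᶜ w).ncard ≤ 2 * n) :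
    Goal G n ℓ m₀ D := by
  right
  have homega : mstar ≤ omegaDepth G D := le_omegaDepth hwit
  have homega2 : l.length ≤ omegaDepth G D := le_omegaDepth ⟨listModel hgood⟩
  refine ⟨C.toFinset, (lsupp (V := V) l).toFinset, l.length, listModel hgood, ?_, ?_, ?_, ?_, ?_, ?_⟩
  · rw [Finset.disjoint_left]
    intro x hx1 hx2
    rw [Set.mem_toFinset] at hx1 hx2
    obtain ⟨X, hX, hxX⟩ := hx2
    exact Set.disjoint_left.mp (hdisjC X hX) hxX hx1
  · show IsBalancedSeparator G _
    have hcoe : (↑C.toFinset ∪ ↑(lsupp (V := V) l).toFinset : Set V)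
        = C ∪ lsupp (V := V) l := by
      rw [Set.coe_toFinset, Set.coe_toFinset]
    rw [IsBalancedSeparator, hcoe]
    exact balanced_of_comp_small hcard hsmall
  · have hcc : C.toFinset.card = C.ncard := (Set.ncard_eq_toFinset_card' C).symm
    rw [hcc, le_div_iff₀ (by exact_mod_cast Nat.lt_of_lt_of_le Nat.zero_lt_one hl)]
    have : (C.ncard : ℝ) * (ℓ : ℝ) = ((C.ncard * ℓ : ℕ) : ℝ) := by push_cast; ring
    rw [this]
    have hcomm : C.ncard * ℓ = ℓ * C.ncard := Nat.mul_comm _ _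
    exact_mod_cast (by omega : C.ncard * ℓ ≤ n)
  · exact le_min hlen homega2
  · rw [listModel_support, Set.coe_toFinset]
  · intro i
    have h1 : ((listModel hgood).B i).ncard ≤ mstar * D := hsize _ (List.get_mem l i)
    exact h1.trans (Nat.mul_le_mul_right D (le_min hms homega))

/-! ### The main induction -/

variable (G) in
def MainProp (n ℓ m₀ D : ℕ) (k : ℕ) : Prop :=
  ∀ (C : Set V) (l : List (Set V)) (mstar : ℕ) (u : V),
    GoodList G l D →
    (∀ X ∈ l, Disjoint X C) →
    (∀ X ∈ l, X.ncard ≤ mstar * D) →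
    l.length < m₀ → mstar ≤ m₀ → Nonempty (CliqueModel G mstar D) →
    u ∉ C ∪ lsupp (V := V) l →
    2 * n < 3 * (comp G (C ∪ lsupp (V := V) l)ᶜ u).ncard →
    (ℓ + 1) * C.ncard + (lsupp (V := V) l).ncard
      + (comp G (C ∪ lsupp (V := V) l)ᶜ u).ncard ≤ n →
    (comp G (C ∪ lsupp (V := V) l)ᶜ u).ncard ≤ k →
    Goal G n ℓ m₀ D

lemma finish_step {n ℓ m₀ D k : ℕ} (hcard : Fintype.card V = n) (hl : 1 ≤ ℓ)
    (IH : ∀ k' : ℕ, k' < k → MainProp G n ℓ m₀ D k')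
    (C' : Set V) (l'' : List (Set V)) (mstar' : ℕ)
    (hgood'' : GoodList G l'' D)
    (hdisjC'' : ∀ X ∈ l'', Disjoint X C')
    (hsize'' : ∀ X ∈ l'', X.ncard ≤ mstar' * D)
    (hlen'' : l''.length < m₀) (hms'' : mstar' ≤ m₀)
    (hwit'' : Nonempty (CliqueModel G mstar' D))
    (hbud0 : ℓ * C'.ncard ≤ n)
    (hbound : ∀ w, w ∉ C' ∪ lsupp (V := V) l'' →
      2 * n < 3 * (comp G (C' ∪ lsupp (V := V) l'')ᶜ w).ncard →
      (ℓ + 1) * C'.ncard + (lsupp (V := V) l'').ncard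
        + (comp G (C' ∪ lsupp (V := V) l'')ᶜ w).ncard ≤ n ∧
      (comp G (C' ∪ lsupp (V := V) l'')ᶜ w).ncard < k) :
    Goal G n ℓ m₀ D := by
  by_cases hbig' : ∃ w, w ∉ C' ∪ lsupp (V := V) l'' ∧
      2 * n < 3 * (comp G (C' ∪ lsupp (V := V) l'')ᶜ w).ncard
  · obtain ⟨w, hw1, hw2⟩ := hbig'
    obtain ⟨hb1, hb2⟩ := hbound w hw1 hw2
    exact IH _ hb2 C' l'' mstar' w hgood'' hdisjC'' hsize'' hlen'' hms'' hwit''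
      hw1 hw2 hb1 le_rfl
  · push_neg at hbig'
    exact terminal2 hcard hl C' l'' mstar' hgood'' hdisjC'' hsize''
      (le_of_lt hlen'') hms'' hwit'' hbud0
      (fun w hw => by have := hbig' w hw; omega)

lemma main_induction {n ℓ m₀ E D : ℕ} (hcard : Fintype.card V = n) (hl : 1 ≤ ℓ)
    (hm0 : 1 ≤ m₀) (hE : n + 1 ≤ 2 ^ E) (hD : 2 * (ℓ * E) + 4 ≤ D) :
    ∀ k : ℕ, MainProp G n ℓ m₀ D k := by
  intro k
  induction k using Nat.strong_induction_on with
  | _ k IH =>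
  intro C l mstar u hgood hdisjC hsize hlen hms hwit huS hbig hbud hk
  have hD1 : 1 ≤ D := by omega
  set S := C ∪ lsupp (V := V) l with hS
  have huA : u ∈ Sᶜ := huS
  set K := comp G Sᶜ u with hKdef
  -- filter the model to branch sets touching K
  obtain ⟨hsubl_l', hallT, hcompl⟩ :=
    (exists_filter (fun X => ∃ x ∈ K, ∃ b ∈ X, G.Adj b x) l).choose_spec
  set l' := (exists_filter (fun X => ∃ x ∈ K, ∃ b ∈ X, G.Adj b x) l).choose with hl'def
  have hmem' : ∀ X ∈ l', X ∈ l := fun X hX => hsubl_l'.subset hX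
  set Sf := C ∪ lsupp (V := V) l' with hSf
  have hSfS : Sf ⊆ S := Set.union_subset_union_right C (lsupp_mono hmem')
  have huSf : u ∉ Sf := fun h => huS (hSfS h)
  have hKf : comp G Sfᶜ u = K := by
    apply comp_eq_of_no_touch hSfS huS
    rintro x hxS hxSf ⟨y, hyK, hadj⟩
    have hxl : x ∈ lsupp (V := V) l := by
      rcases hxS with h | h
      · exact absurd (Or.inl h) hxSf
      · exact h
    obtain ⟨X, hXl, hxX⟩ := hxl
    have hXl' : X ∈ l' := hcompl X hXl ⟨y, hyK, x, hxX, hadj⟩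
    exact hxSf (Or.inr ⟨X, hXl', hxX⟩)
  have hgood' : GoodList G l' D :=
    ⟨hgood.1.sublist hsubl_l', fun X hX => hgood.2 X (hmem' X hX)⟩
  have hdisjC' : ∀ X ∈ l', Disjoint X C := fun X hX => hdisjC X (hmem' X hX)
  have hsize' : ∀ X ∈ l', X.ncard ≤ mstar * D := fun X hX => hsize X (hmem' X hX)
  have hlen' : l'.length < m₀ := lt_of_le_of_lt hsubl_l'.length_le hlen
  have hsuppf_le : (lsupp (V := V) l').ncard ≤ (lsupp (V := V) l).ncard :=
    Set.ncard_le_ncard (lsupp_mono hmem') (Set.toFinite _)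
  -- BFS bookkeeping
  have huK : u ∈ K := mem_comp_self huA
  have hKsub : K ⊆ Sᶜ := comp_subset _ _
  set bb : ℕ → ℕ := fun j => (ball G K u j).ncard with hbb
  set dd : ℕ → ℕ := fun j => (ball G K u (j+1) \ ball G K u j).ncard with hdd
  set TT : ℕ → ℕ := fun j => (K \ ball G K u j).ncard with hTT
  have hstep_b : ∀ j, bb (j+1) = bb j + dd j := fun j => ball_ncard_step u j
  have hstep_T : ∀ j, TT j = TT (j+1) + dd j := fun j => tail_ncard_step huA K hKdef j
  have hT_eq : ∀ j, TT j + bb j = K.ncard := fun j => tail_ncard_eq huA K hKdef j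
  have hb0 : bb 0 = 1 := by simp [hbb, ball]
  have hb_le : ∀ j, bb j ≤ K.ncard :=
    fun j => Set.ncard_le_ncard (ball_subset huK j) (Set.toFinite _)
  have hb_mono : ∀ {s t : ℕ}, s ≤ t → bb s ≤ bb t := fun h => b_mono bb dd hstep_b h
  have hKn : K.ncard ≤ n := by omega
  -- existence of an inside-cheap level j₁
  obtain ⟨j₁, hj₁lt, hj₁⟩ : ∃ j, j < ℓ * E ∧ ℓ * dd j ≤ bb j := by
    by_contra hcon
    push_neg at hcon
    have hgrow := growth_main bb dd ℓ E hl hstep_b (by omega)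
      (fun j hj => by have := hcon j hj; omega)
    have h2 := hb_le (ℓ * E)
    have h3 : 2 ^ E ≥ n + 1 := hE
    omega
  by_cases hB1 : ∀ X ∈ l', ∃ x, x ∈ ball G K u (D - 1) ∧ ∃ b ∈ X, G.Adj b x
  · -- EXTENSION CASE
    choose xf hxball hxadj using hB1
    have hpath := fun X hX => exists_path_set (G := G) huK (hxball X hX)
    choose Pf hPsub hPu hPx hPcard hPball using hpath
    set pl := l'.attach.map (fun z => Pf z.1 z.2) with hpl
    set Bnew := insert u (lsupp (V := V) pl) with hBnewdef
    have hmem_pl : ∀ P' ∈ pl, ∃ X, ∃ hX : X ∈ l', P' = Pf X hX := by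
      intro P' hP'
      simp only [hpl, List.mem_map, List.mem_attach, true_and] at hP'
      obtain ⟨z, rfl⟩ := hP'
      exact ⟨z.1, z.2, rfl⟩
    have hmem_pl' : ∀ X, ∀ hX : X ∈ l', Pf X hX ∈ pl := by
      intro X hX
      simp only [hpl, List.mem_map, List.mem_attach, true_and]
      exact ⟨⟨X, hX⟩, rfl⟩
    have hBnewK : Bnew ⊆ K := by
      rintro x hx
      rcases Set.mem_insert_iff.mp hx with rfl | hx
      · exact huK
      · obtain ⟨P', hP', hxP'⟩ := hx
        obtain ⟨X, hX, rfl⟩ := hmem_pl P' hP'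
        exact hPsub X hX hxP'
    have huBnew : u ∈ Bnew := Set.mem_insert _ _
    have hBnew_ball : ∀ w ∈ Bnew, w ∈ ball G Bnew u D := by
      intro w hw
      rcases Set.mem_insert_iff.mp hw with rfl | hw
      · exact mem_ball_self _ _ _
      · obtain ⟨P', hP', hwP'⟩ := hw
        obtain ⟨X, hX, rfl⟩ := hmem_pl P' hP'
        have h1 : w ∈ ball G (Pf X hX) u (D - 1) := hPball X hX w hwP'
        have h2 : Pf X hX ⊆ Bnew := by
          intro z hz
          exact Set.mem_insert_of_mem _ ⟨Pf X hX, hmem_pl' X hX, hz⟩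
        exact ball_mono_nat Bnew u (Nat.sub_le D 1) (ball_mono_set h2 u (D-1) h1)
    have hBnew_card : Bnew.ncard ≤ 1 + l'.length * D := by
      have h1 : (lsupp (V := V) pl).ncard ≤ pl.length * D := by
        apply ncard_lsupp_le
        intro P' hP'
        obtain ⟨X, hX, rfl⟩ := hmem_pl P' hP'
        have := hPcard X hX
        omega
      have h2 : pl.length = l'.length := by simp [hpl]
      rw [h2] at h1
      have h3 : Bnew.ncard ≤ (lsupp (V := V) pl).ncard + 1 := by
        rw [hBnewdef]; exact Set.ncard_insert_le _ _
      omega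
    have hKS : ∀ x ∈ K, x ∉ S := fun x hx => hKsub hx
    have hBnew_rel : ∀ X ∈ l', Rel2 G Bnew X := by
      intro X hX
      constructor
      · rw [Set.disjoint_left]
        intro x hxB hxX
        exact hKS x (hBnewK hxB) (Or.inr ⟨X, hmem' X hX, hxX⟩)
      · obtain ⟨b, hb, hadj⟩ := hxadj X hX
        exact ⟨xf X hX, Set.mem_insert_of_mem _ ⟨Pf X hX, hmem_pl' X hX, hPx X hX⟩,
          b, hb, hadj.symm⟩
    have hgood'' : GoodList G (Bnew :: l') D := by
      constructor
      · rw [List.pairwise_cons]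
        exact ⟨hBnew_rel, hgood'.1⟩
      · intro X hX
        rcases List.mem_cons.mp hX with rfl | hX
        · exact ⟨u, huBnew, hBnew_ball⟩
        · exact hgood'.2 X hX
    set mstar' := max mstar (l'.length + 1) with hmstar'
    have hBnew_card' : Bnew.ncard ≤ (l'.length + 1) * D := by
      have hh : (l'.length + 1) * D = l'.length * D + D := by ring
      omega
    have hsize'' : ∀ X ∈ (Bnew :: l'), X.ncard ≤ mstar' * D := by
      intro X hX
      rcases List.mem_cons.mp hX with rfl | hX
      · exact hBnew_card'.trans (Nat.mul_le_mul_right D (le_max_right _ _))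
      · exact (hsize' X hX).trans (Nat.mul_le_mul_right D (le_max_left _ _))
    have hlencons : (Bnew :: l').length = l'.length + 1 := by simp
    have hwit'' : Nonempty (CliqueModel G mstar' D) := by
      rcases Nat.le_total (l'.length + 1) mstar with hcase | hcase
      · rw [hmstar', Nat.max_eq_left hcase]; exact hwit
      · rw [hmstar', Nat.max_eq_right hcase]
        have := listModel hgood''
        rw [hlencons] at this
        exact ⟨this⟩
    by_cases hfin : l'.length + 1 = m₀
    · -- complete model : option (i)
      apply goal_left (n := n) (ℓ := ℓ) hgood'' (by omega)
      intro X hX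
      have h1 := hsize'' X hX
      have h2 : mstar' ≤ m₀ := by
        apply max_le hms
        omega
      exact h1.trans (Nat.mul_le_mul_right D h2)
    · -- extend the model and recurse
      have hdisjC'' : ∀ X ∈ (Bnew :: l'), Disjoint X C := by
        intro X hX
        rcases List.mem_cons.mp hX with rfl | hX
        · rw [Set.disjoint_left]
          intro x hxB hxC
          exact hKS x (hBnewK hxB) (Or.inl hxC)
        · exact hdisjC' X hX
      apply finish_step hcard hl IH C (Bnew :: l') mstar' hgood'' hdisjC'' hsize''
        (by rw [hlencons]; omega) (max_le hms (by omega)) hwit''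
        (by have hh : (ℓ+1) * C.ncard = ℓ * C.ncard + C.ncard := by ring
            omega)
      intro w hw hwbig
      set Snew := C ∪ lsupp (V := V) (Bnew :: l') with hSnew
      set Know := comp G Snewᶜ w with hKnow
      have hSfSnew : Sf ⊆ Snew := by
        rw [hSnew, lsupp_cons]
        rintro x (hx | hx)
        · exact Or.inl hx
        · exact Or.inr (Or.inr hx)
      have h1 : Know ⊆ comp G Sfᶜ w :=
        comp_mono (Set.compl_subset_compl.mpr hSfSnew) w
      have h2 : 2 * n < 3 * (comp G Sfᶜ w).ncard := by
        have := Set.ncard_le_ncard h1 (Set.toFinite _)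
        omega
      have h3 : comp G Sfᶜ w = K := by
        have hKbig : 2 * n < 3 * (comp G Sfᶜ u).ncard := by rw [hKf]; exact hbig
        rw [big_eq hcard h2 hKbig, hKf]
      have hKnowK : Know ⊆ K := h3 ▸ h1
      have huSnew : u ∈ Snew := by
        rw [hSnew, lsupp_cons]
        exact Or.inr (Or.inl huBnew)
      have hunotKnow : u ∉ Know := fun hu => (comp_subset _ _ hu) huSnew
      have hKnow_lt : Know.ncard < K.ncard :=
        Set.ncard_lt_ncard ((Set.ssubset_iff_of_subset hKnowK).mpr ⟨u, huK, hunotKnow⟩)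
          (Set.toFinite _)
      constructor
      · -- budget
        have hc1 : (lsupp (V := V) (Bnew :: l')).ncard
            ≤ Bnew.ncard + (lsupp (V := V) l').ncard := by
          rw [lsupp_cons]; exact Set.ncard_union_le _ _
        have hdisjBK : Disjoint Bnew Know := by
          rw [Set.disjoint_left]
          intro x hxB hxK
          have hxSnew : x ∈ Snew := by
            rw [hSnew, lsupp_cons]
            exact Or.inr (Or.inl hxB)
          exact (comp_subset _ _ hxK) hxSnew
        have hun : (Bnew ∪ Know).ncard = Bnew.ncard + Know.ncard :=
          Set.ncard_union_eq hdisjBK (Set.toFinite _) (Set.toFinite _)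
        have hsubK : Bnew ∪ Know ⊆ K := Set.union_subset hBnewK hKnowK
        have hle : (Bnew ∪ Know).ncard ≤ K.ncard :=
          Set.ncard_le_ncard hsubK (Set.toFinite _)
        omega
      · omega
  · -- CUT CASE
    push_neg at hB1
    obtain ⟨X₀, hX₀l', hX₀⟩ := hB1
    obtain ⟨xstar, hxstarK, b₀, hb₀, hadj₀⟩ := hallT X₀ hX₀l'
    have hxstar_not : xstar ∉ ball G K u (D - 1) :=
      fun hmem => hX₀ xstar hmem b₀ hb₀ hadj₀
    have hKself : comp G K u = K := by rw [hKdef]; exact comp_self huA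
    have hlev : ∀ j, j + 1 ≤ D - 1 → 1 ≤ dd j := by
      intro j hj
      by_contra hz
      have hz0 : dd j = 0 := by omega
      have hdiffempty : ball G K u (j+1) \ ball G K u j = ∅ :=
        Set.ncard_eq_zero (Set.toFinite _) |>.mp hz0
      have hstab : ball G K u (j+1) ⊆ ball G K u j := by
        intro x hx
        by_cases h : x ∈ ball G K u j
        · exact h
        · exfalso
          have hmem2 : x ∈ ball G K u (j+1) \ ball G K u j := ⟨hx, h⟩
          rw [hdiffempty] at hmem2
          exact hmem2
      have hcompball := comp_subset_ball_of_stab (huK : u ∈ K) hstab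
      have hx1 : xstar ∈ ball G K u j := hcompball (by rw [hKself]; exact hxstarK)
      exact hxstar_not (ball_mono_nat K u (by omega) hx1)
    have hTT1 : ∀ j, j + 1 ≤ D - 1 → 1 ≤ TT j := by
      intro j hj
      have h1 := hlev j hj
      have h2 := hstep_T j
      omega
    -- choose the cut level jc, together with its mode
    obtain ⟨jc, hjcD, hjcmode⟩ :
        ∃ jc, jc + 1 ≤ D - 1 ∧
          ((3 * bb j₁ ≤ 2 * n ∧ jc = j₁ ∧ ℓ * dd jc ≤ bb jc) ∨
           (2 * n < 3 * bb j₁ ∧ j₁ ≤ jc ∧ ℓ * dd jc ≤ TT (jc+1))) := by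
      by_cases hinside : 3 * bb j₁ ≤ 2 * n
      · exact ⟨j₁, by omega, Or.inl ⟨hinside, rfl, hj₁⟩⟩
      · obtain ⟨j₂, hj₂ge, hj₂lt, hj₂⟩ :
            ∃ j, j₁ ≤ j ∧ j < j₁ + ℓ * E ∧ ℓ * dd j ≤ TT (j+1) := by
          by_contra hcon
          push_neg at hcon
          have hhalf := halving_main TT dd ℓ E j₁ hl hstep_T
            (hTT1 (j₁ + ℓ * E) (by omega))
            (fun j hj1 hj2 => by have := hcon j hj1 hj2; omega)
          have h2 : TT j₁ + bb j₁ = K.ncard := hT_eq j₁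
          omega
        exact ⟨j₂, by omega, Or.inr ⟨by omega, hj₂ge, hj₂⟩⟩
    set L := ball G K u (jc+1) \ ball G K u jc with hLdef
    have hddL : dd jc = L.ncard := rfl
    rw [hddL] at hjcmode
    have hLK : L ⊆ K := fun x hx => ball_subset huK (jc+1) hx.1
    have hLne : 1 ≤ L.ncard := by
      have := hlev jc hjcD
      omega
    set Cnew := C ∪ L with hCnewdef
    have hdisjCL : Disjoint C L := by
      rw [Set.disjoint_left]
      intro x hxC hxL
      exact (hKsub (hLK hxL)) (Or.inl hxC)
    have hCnew_card : Cnew.ncard = C.ncard + L.ncard :=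
      Set.ncard_union_eq hdisjCL (Set.toFinite _) (Set.toFinite _)
    have hdisjC'' : ∀ X ∈ l', Disjoint X Cnew := by
      intro X hX
      rw [Set.disjoint_left]
      intro x hxX hxC
      rcases hxC with hxC | hxL
      · exact Set.disjoint_left.mp (hdisjC' X hX) hxX hxC
      · exact (hKsub (hLK hxL)) (Or.inr ⟨X, hmem' X hX, hxX⟩)
    have hSnew_eq : Cnew ∪ lsupp (V := V) l' = Sf ∪ L := by
      rw [hCnewdef, hSf]
      ext x
      constructor
      · rintro (⟨h | h⟩ | h)
        · exact Or.inl (Or.inl h)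
        · exact Or.inr h
        · exact Or.inl (Or.inr h)
      · rintro (⟨h | h⟩ | h)
        · exact Or.inl (Or.inl h)
        · exact Or.inr h
        · exact Or.inl (Or.inr h)
    have hSfsub : Sf ⊆ Cnew ∪ lsupp (V := V) l' := by
      rw [hSnew_eq]; exact Set.subset_union_left
    apply finish_step hcard hl IH Cnew l' mstar hgood' hdisjC'' hsize' hlen' hms hwit
    · -- ℓ * Cnew.ncard ≤ n
      have hring : (ℓ+1) * C.ncard = ℓ * C.ncard + C.ncard := by ring
      have hmul : ℓ * Cnew.ncard = ℓ * C.ncard + ℓ * L.ncard := by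
        rw [hCnew_card]; ring
      have hLK_le : ℓ * L.ncard ≤ K.ncard := by
        rcases hjcmode with ⟨_, _, hcut⟩ | ⟨_, _, hcut⟩
        · have := hb_le jc
          omega
        · have h1 := hT_eq (jc+1)
          have h2 := hb_le (jc+1)
          omega
      omega
    · -- hbound
      intro w hw hwbig
      set Know := comp G (Cnew ∪ lsupp (V := V) l')ᶜ w with hKnowdef
      have h1 : Know ⊆ comp G Sfᶜ w :=
        comp_mono (Set.compl_subset_compl.mpr hSfsub) w
      have h2 : 2 * n < 3 * (comp G Sfᶜ w).ncard := by
        have := Set.ncard_le_ncard h1 (Set.toFinite _)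
        omega
      have h3 : comp G Sfᶜ w = K := by
        have hKbig : 2 * n < 3 * (comp G Sfᶜ u).ncard := by rw [hKf]; exact hbig
        rw [big_eq hcard h2 hKbig, hKf]
      have hKnowK : Know ⊆ K := h3 ▸ h1
      have hKnowL : ∀ x ∈ Know, x ∉ L := by
        intro x hx hxL
        exact (comp_subset _ _ hx) (by rw [hSnew_eq]; exact Or.inr hxL)
      have hcross : (∀ x ∈ Know, x ∈ ball G K u jc) ∨ (∀ x ∈ Know, x ∉ ball G K u (jc+1)) := by
        by_cases hz : ∃ z ∈ Know, z ∈ ball G K u jc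
        · left
          obtain ⟨z, hzK, hzb⟩ := hz
          intro x hx
          have hrzx : Relation.ReflTransGen (rel G (Cnew ∪ lsupp (V := V) l')ᶜ) z x :=
            (reach_symm _ hzK.1).trans hx.1
          have hset2 : (Cnew ∪ lsupp (V := V) l')ᶜ = Sfᶜ \ L := by
            rw [hSnew_eq, Set.compl_union, Set.diff_eq]
          rw [hset2] at hrzx
          exact stay_in_ball (show u ∈ Sfᶜ from huSf) K hKf.symm jc hrzx hzb
        · right
          intro x hx hxb1
          by_cases hxb : x ∈ ball G K u jc
          · exact hz ⟨x, hx, hxb⟩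
          · exact hKnowL x hx ⟨hxb1, hxb⟩
      have hT_j : TT (jc+1) + bb (jc+1) = K.ncard := hT_eq (jc+1)
      have hstepj : bb (jc+1) = bb jc + L.ncard := by
        rw [← hddL]; exact hstep_b jc
      have hring : (ℓ+1) * Cnew.ncard = ℓ * C.ncard + C.ncard + ℓ * L.ncard + L.ncard := by
        rw [hCnew_card]; ring
      have hring2 : (ℓ+1) * C.ncard = ℓ * C.ncard + C.ncard := by ring
      rcases hjcmode with ⟨hmode, hjcj₁, hcut⟩ | ⟨hmode, hjcge, hcut⟩
      
      · -- inside mode : Know must avoid the ball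
        have hKnow_tail : ∀ x ∈ Know, x ∉ ball G K u (jc+1) := by
          rcases hcross with hleft | hright
          · exfalso
            have hsub : Know ⊆ ball G K u jc := hleft
            have hle : Know.ncard ≤ bb jc := Set.ncard_le_ncard hsub (Set.toFinite _)
            rw [hjcj₁] at hle
            omega
          · exact hright
        have hKnow_sub : Know ⊆ K \ ball G K u (jc+1) :=
          fun x hx => ⟨hKnowK hx, hKnow_tail x hx⟩
        have hKnow_le : Know.ncard ≤ TT (jc+1) :=
          Set.ncard_le_ncard hKnow_sub (Set.toFinite _)
        have hunotKnow : u ∉ Know := by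
          intro hu
          exact hKnow_tail u hu (ball_mono_nat K u (by omega) (mem_ball_self K u 0))
        have hKnow_lt : Know.ncard < K.ncard :=
          Set.ncard_lt_ncard ((Set.ssubset_iff_of_subset hKnowK).mpr
            ⟨u, huK, hunotKnow⟩) (Set.toFinite _)
        constructor
        · -- budget : charge the inside ball
          have hbbjc : bb jc ≤ K.ncard := hb_le jc
          omega
        · omega
      · -- tail mode : Know must be inside the ball
        have hKnow_ball : ∀ x ∈ Know, x ∈ ball G K u jc := by
          rcases hcross with hleft | hright
          · exact hleft
          · exfalso
            have hsub : Know ⊆ K \ ball G K u (jc+1) :=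
              fun x hx => ⟨hKnowK hx, hright x hx⟩
            have hle : Know.ncard ≤ TT (jc+1) :=
              Set.ncard_le_ncard hsub (Set.toFinite _)
            have hmono : bb j₁ ≤ bb (jc+1) := hb_mono (by omega)
            omega
        have hKnow_sub : Know ⊆ ball G K u jc := hKnow_ball
        have hKnow_le : Know.ncard ≤ bb jc :=
          Set.ncard_le_ncard hKnow_sub (Set.toFinite _)
        obtain ⟨z, hzL⟩ : L.Nonempty := by
          rcases Set.eq_empty_or_nonempty L with h | h
          · rw [h] at hLne; simp at hLne
          · exact h
        have hzK : z ∈ K := hLK hzL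
        have hznotKnow : z ∉ Know := fun hz => hKnowL z hz hzL
        have hKnow_lt : Know.ncard < K.ncard :=
          Set.ncard_lt_ncard ((Set.ssubset_iff_of_subset hKnowK).mpr
            ⟨z, hzK, hznotKnow⟩) (Set.toFinite _)
        constructor
        · omega
        · omega

/-! ### Top-level wrapper -/

lemma model_zero (D : ℕ) : Nonempty (CliqueModel G 0 D) :=
  ⟨⟨fun i => i.elim0, fun i => i.elim0, fun i => i.elim0,
    fun i => i.elim0, fun i => i.elim0⟩⟩

lemma per_graph {n ℓ m₀ E D : ℕ} (hcard : Fintype.card V = n) (hl : 1 ≤ ℓ)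
    (hm0 : 1 ≤ m₀) (hE : n + 1 ≤ 2 ^ E) (hD : 2 * (ℓ * E) + 4 ≤ D) :
    Goal G n ℓ m₀ D := by
  have hgood0 : GoodList G ([] : List (Set V)) D := ⟨List.Pairwise.nil, by simp⟩
  have hS0 : ((∅ : Set V) ∪ lsupp (V := V) ([] : List (Set V))) = ∅ := by
    rw [lsupp_nil]; simp
  by_cases hbig : ∃ u, u ∉ ((∅ : Set V) ∪ lsupp (V := V) ([] : List (Set V))) ∧
      2 * n < 3 * (comp G ((∅ : Set V) ∪ lsupp (V := V) ([] : List (Set V)))ᶜ u).ncard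
  · obtain ⟨u, hu1, hu2⟩ := hbig
    have hcompn : (comp G ((∅ : Set V) ∪ lsupp (V := V) ([] : List (Set V)))ᶜ u).ncard ≤ n := by
      have h1 : (comp G ((∅ : Set V) ∪ lsupp (V := V) ([] : List (Set V)))ᶜ u).ncard
          ≤ (Set.univ : Set V).ncard :=
        Set.ncard_le_ncard (Set.subset_univ _) (Set.toFinite _)
      rwa [Set.ncard_univ, Nat.card_eq_fintype_card, hcard] at h1
    apply main_induction hcard hl hm0 hE hD
      ((comp G ((∅ : Set V) ∪ lsupp (V := V) ([] : List (Set V)))ᶜ u).ncard)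
      ∅ [] 0 u hgood0 (by simp) (by simp) hm0 (Nat.zero_le _) (model_zero D) hu1 hu2
    · have he : (∅ : Set V).ncard = 0 := Set.ncard_empty V
      have hn : (lsupp (V := V) ([] : List (Set V))).ncard = 0 := by
        rw [lsupp_nil]; exact Set.ncard_empty V
      have hzz : (ℓ + 1) * (∅ : Set V).ncard = 0 := by rw [he]; ring
      omega
    · exact le_rfl
  · push_neg at hbig
    exact terminal2 hcard hl ∅ [] 0 hgood0 (by simp) (by simp) (Nat.zero_le _)
      (Nat.zero_le _) (model_zero D) (by simp)
      (fun w hw => by have := hbig w hw; omega)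

end PRS

/-- Plotkin–Rao–Smith, Theorem 1. -/
theorem stmt0 :
    ∃ (a : ℝ) (d : ℕ → ℕ → ℕ), 0 < a ∧
      (∀ ℓ ℓ' n n' : ℕ, ℓ ≤ ℓ' → n ≤ n' → d ℓ n ≤ d ℓ' n') ∧
      (∀ ℓ n : ℕ, 1 ≤ ℓ → 1 ≤ n → (d ℓ n : ℝ) ≤ a * ℓ * Real.logb 2 (n + 1)) ∧
      (∀ (V : Type) [Fintype V] (G : SimpleGraph V) (n ℓ m₀ : ℕ),
        Fintype.card V = n → 1 ≤ ℓ → 1 ≤ m₀ →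
        (∃ M : CliqueModel G m₀ (d ℓ n), M.Bounded m₀) ∨
        (∃ (C M : Finset V) (m : ℕ) (Mod : CliqueModel G m (d ℓ n)),
          Disjoint C M ∧
          IsBalancedSeparator G (↑C ∪ ↑M) ∧
          (C.card : ℝ) ≤ (n : ℝ) / ℓ ∧
          m ≤ min m₀ (omegaDepth G (d ℓ n)) ∧
          Mod.support = ↑M ∧
          Mod.Bounded (min m₀ (omegaDepth G (d ℓ n))))) := by
  refine ⟨8, fun ℓ n => 2 * (ℓ * Nat.clog 2 (n+1)) + 4, by norm_num, ?_, ?_, ?_⟩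
  · intro ℓ ℓ' n n' hℓ hn
    show 2 * (ℓ * Nat.clog 2 (n+1)) + 4 ≤ 2 * (ℓ' * Nat.clog 2 (n'+1)) + 4
    have h1 : Nat.clog 2 (n+1) ≤ Nat.clog 2 (n'+1) := Nat.clog_mono_right 2 (by omega)
    have h2 : ℓ * Nat.clog 2 (n+1) ≤ ℓ' * Nat.clog 2 (n'+1) := Nat.mul_le_mul hℓ h1
    omega
  · intro ℓ n hℓ hn
    set t := Nat.log 2 (n+1) with ht
    set c := Nat.clog 2 (n+1) with hc
    have hc_le : c ≤ t + 1 := by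
      have h1 : n + 1 < 2 ^ (t + 1) := Nat.lt_pow_succ_log_self (by norm_num) (n+1)
      exact (Nat.clog_le_iff_le_pow (by norm_num)).mpr (le_of_lt h1)
    have ht_le : (t : ℝ) ≤ Real.logb 2 (n + 1) := by
      have h1 : (2 : ℝ) ^ t ≤ ((n : ℝ) + 1) := by
        have := Nat.pow_log_le_self 2 (show n + 1 ≠ 0 by omega)
        exact_mod_cast this
      calc (t : ℝ) = Real.logb 2 ((2 : ℝ) ^ t) := by
            rw [Real.logb_pow, Real.logb_self_eq_one (by norm_num : (1:ℝ) < 2)]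
            ring
        _ ≤ Real.logb 2 ((n : ℝ) + 1) := by
            exact Real.logb_le_logb_of_le (by norm_num) (by positivity) h1
    have hlog1 : 1 ≤ Real.logb 2 ((n : ℝ) + 1) := by
      have h2 : (2 : ℝ) ≤ (n : ℝ) + 1 := by
        have : (1 : ℝ) ≤ (n : ℝ) := by exact_mod_cast hn
        linarith
      calc (1 : ℝ) = Real.logb 2 2 := (Real.logb_self_eq_one (by norm_num : (1:ℝ) < 2)).symm
        _ ≤ Real.logb 2 ((n : ℝ) + 1) :=
            Real.logb_le_logb_of_le (by norm_num) (by norm_num) h2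
    have hℓ1 : (1 : ℝ) ≤ (ℓ : ℝ) := by exact_mod_cast hℓ
    have hcast : ((2 * (ℓ * c) + 4 : ℕ) : ℝ) = 2 * (ℓ : ℝ) * (c : ℝ) + 4 := by
      push_cast; ring
    rw [hcast]
    have hc_le' : (c : ℝ) ≤ (t : ℝ) + 1 := by exact_mod_cast hc_le
    set lg := Real.logb 2 ((n : ℝ) + 1) with hlg
    have hℓpos : (0 : ℝ) ≤ (ℓ : ℝ) := by linarith
    calc 2 * (ℓ : ℝ) * (c : ℝ) + 4 ≤ 2 * (ℓ : ℝ) * ((t : ℝ) + 1) + 4 := by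
          have := mul_le_mul_of_nonneg_left hc_le' (show (0:ℝ) ≤ 2 * (ℓ:ℝ) by linarith)
          linarith
      _ ≤ 2 * (ℓ : ℝ) * (lg + lg) + 4 * ((ℓ : ℝ) * lg) := by
          have h1 : (t : ℝ) + 1 ≤ lg + lg := by linarith
          have h2 := mul_le_mul_of_nonneg_left h1 (show (0:ℝ) ≤ 2 * (ℓ:ℝ) by linarith)
          have h3 : (1 : ℝ) ≤ (ℓ : ℝ) * lg := by nlinarith
          linarith
      _ = 8 * (ℓ : ℝ) * lg := by ring
  · intro V _ G n ℓ m₀ hcard hl hm0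
    have hE : n + 1 ≤ 2 ^ (Nat.clog 2 (n+1)) := Nat.le_pow_clog (by norm_num) (n+1)
    have hgoal := PRS.per_graph (G := G) hcard hl hm0 hE
      (le_refl (2 * (ℓ * Nat.clog 2 (n+1)) + 4))
    rcases hgoal with h | h
    · exact Or.inl h
    · exact Or.inr h
end

section
/- There exist a constant a > 0 and a non-decreasing function d : ℕ × ℕ → ℕ with d(ℓ,n) ≤ a·ℓ·log₂(n+1) for all ℓ, n ≥ 1, such that for every finite simple graph G on n vertices, all integers ℓ, m₀ ≥ 1, and every assignment q : V(G) → ℚ of nonnegative costs to the vertices of G, writing d = d(ℓ,n), at least one of the following holds: (i) G contains an m₀-bounded model of K_{m₀} of depth d; or (ii) there exist disjoint sets C, M ⊆ V(G) such that C ∪ M is a balanced separator in G, q(C) ≤ q(V(G))/ℓ, and for some m ≤ min(m₀, ω_d(G)), M is the support of a min(m₀, ω_d(G))-bounded model of K_m of depth d in G. -/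
open scoped Classical

universe u

set_option linter.unusedSectionVars false
set_option maxHeartbeats 1000000

namespace PRSaux

variable {V : Type} [Fintype V] {G : SimpleGraph V}

/-! ### Walks in induced subgraphs -/

lemma toInduceWalk {A : Set V} :
    ∀ {u v : V} (p : G.Walk u v), (∀ x ∈ p.support, x ∈ A) → ∀ (hu : u ∈ A) (hv : v ∈ A),
      ∃ q : (G.induce A).Walk ⟨u, hu⟩ ⟨v, hv⟩, q.length = p.length := by
  intro u v p
  induction p with
  | nil => intro _ hu hv; exact ⟨SimpleGraph.Walk.nil, rfl⟩
  | @cons u w v h p ih =>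
      intro hp hu hv
      have hw : w ∈ A := hp w (by simp [SimpleGraph.Walk.support_cons])
      have hp' : ∀ x ∈ p.support, x ∈ A := fun x hx =>
        hp x (by simp [SimpleGraph.Walk.support_cons, hx])
      obtain ⟨q, hq⟩ := ih hp' hw hv
      exact ⟨SimpleGraph.Walk.cons (by exact h : (G.induce A).Adj ⟨u, hu⟩ ⟨w, hw⟩) q,
        by show q.length + 1 = _; rw [hq]; rfl⟩

lemma fromInduceWalk {A : Set V} {a b : A} (q : (G.induce A).Walk a b) :
    ∃ p : G.Walk a.1 b.1, (∀ x ∈ p.support, x ∈ A) ∧ p.length = q.length := by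
  refine ⟨q.map (SimpleGraph.Embedding.induce A).toHom, ?_, q.length_map _⟩
  intro x hx
  have hx : x ∈ (q.map (SimpleGraph.Embedding.induce A).toHom).support := hx
  rw [SimpleGraph.Walk.support_map] at hx
  obtain ⟨y, _, rfl⟩ := List.mem_map.mp hx
  exact y.2

/-! ### Regions: supports of connected components of `G - T` -/

/-- `Region T X` : `X` is (the vertex set of) a connected component of `G - T`. -/
def Region (G : SimpleGraph V) (T X : Set V) : Prop :=
  X.Nonempty ∧ (X ∩ T = ∅) ∧
    (∀ x ∈ X, ∀ y, G.Adj x y → y ∉ T → y ∈ X) ∧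
    (∀ x ∈ X, ∀ y ∈ X, ∃ p : G.Walk x y, ∀ z ∈ p.support, z ∈ X)

lemma Region.nonempty {T X : Set V} (h : Region G T X) : X.Nonempty := h.1

lemma Region.disj {T X : Set V} (h : Region G T X) {x : V} (hx : x ∈ X) : x ∉ T := by
  intro hxT
  have : x ∈ X ∩ T := ⟨hx, hxT⟩
  rw [h.2.1] at this
  exact this

/-- walks staying out of `T` starting in a region stay in the region. -/
lemma Region.walk_stay {T X : Set V} (h : Region G T X) :
    ∀ {x y : V} (p : G.Walk x y), (∀ z ∈ p.support, z ∉ T) → x ∈ X → y ∈ X := by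
  intro x y p
  induction p with
  | nil => intro _ hx; exact hx
  | @cons u w v hadj p ih =>
      intro hp hu
      have hw : w ∈ X := h.2.2.1 u hu w hadj
        (hp w (by simp [SimpleGraph.Walk.support_cons]))
      exact ih (fun z hz => hp z (by simp [SimpleGraph.Walk.support_cons, hz])) hw

lemma Region.eq_or_disjoint {T X Y : Set V} (hX : Region G T X) (hY : Region G T Y) :
    X = Y ∨ X ∩ Y = ∅ := by
  by_cases h : X ∩ Y = ∅
  · exact Or.inr h
  · left
    obtain ⟨z, hzX, hzY⟩ := Set.nonempty_iff_ne_empty.mpr h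
    apply Set.eq_of_subset_of_subset
    · intro a haX
      obtain ⟨p, hp⟩ := hX.2.2.2 z hzX a haX
      exact hY.walk_stay p (fun w hw => hX.disj (hp w hw)) hzY
    · intro a haY
      obtain ⟨p, hp⟩ := hY.2.2.2 z hzY a haY
      exact hX.walk_stay p (fun w hw => hY.disj (hp w hw)) hzX

/-- The (projected) support of a connected component of `G.induce Tᶜ`. -/
def suppV {T : Set V} (K : (G.induce Tᶜ).ConnectedComponent) : Set V :=
  Subtype.val '' K.supp

lemma mem_suppV {T : Set V} {K : (G.induce Tᶜ).ConnectedComponent} {x : V} :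
    x ∈ suppV K ↔ ∃ hx : x ∈ Tᶜ, (G.induce Tᶜ).connectedComponentMk ⟨x, hx⟩ = K := by
  constructor
  · rintro ⟨⟨y, hy⟩, hmem, rfl⟩
    exact ⟨hy, hmem⟩
  · rintro ⟨hx, hmk⟩
    exact ⟨⟨x, hx⟩, hmk, rfl⟩

/-- The support of a connected component of `G.induce Tᶜ` is a region. -/
lemma supp_region {T : Set V} (K : (G.induce Tᶜ).ConnectedComponent) :
    Region G T (suppV K) := by
  obtain ⟨⟨v, hv⟩, hK⟩ := K.exists_rep
  refine ⟨⟨v, mem_suppV.mpr ⟨hv, hK⟩⟩, ?_, ?_, ?_⟩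
  · ext x
    simp only [Set.mem_inter_iff, Set.mem_empty_iff_false, iff_false, not_and]
    rintro hx hxT
    obtain ⟨hx', -⟩ := mem_suppV.mp hx
    exact hx' hxT
  · intro x hx y hadj hyT
    obtain ⟨hx', hmk⟩ := mem_suppV.mp hx
    refine mem_suppV.mpr ⟨hyT, ?_⟩
    rw [← hmk]
    exact SimpleGraph.ConnectedComponent.connectedComponentMk_eq_of_adj
      (by exact hadj.symm : (G.induce Tᶜ).Adj ⟨y, hyT⟩ ⟨x, hx'⟩)
  · intro x hx y hy
    obtain ⟨hx', hmkx⟩ := mem_suppV.mp hx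
    obtain ⟨hy', hmky⟩ := mem_suppV.mp hy
    have hreach : (G.induce Tᶜ).Reachable ⟨x, hx'⟩ ⟨y, hy'⟩ :=
      SimpleGraph.ConnectedComponent.exact (hmkx.trans hmky.symm)
    obtain ⟨q⟩ := hreach
    obtain ⟨p, hp, -⟩ := fromInduceWalk q
    refine ⟨p, fun z hz => ?_⟩
    have hzT : z ∈ Tᶜ := hp z hz
    -- z is reachable from x within Tᶜ, via the prefix of p
    classical
    have hz' : z ∈ p.support := hz
    obtain ⟨p', hp's, -⟩ : ∃ p' : G.Walk x z, (∀ w ∈ p'.support, w ∈ Tᶜ) ∧ True :=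
      ⟨p.takeUntil z hz', fun w hw => hp w (p.support_takeUntil_subset hz' hw), trivial⟩
    obtain ⟨q', -⟩ := toInduceWalk p' hp's hx' hzT
    refine mem_suppV.mpr ⟨hzT, ?_⟩
    rw [← hmkx]
    exact (SimpleGraph.ConnectedComponent.sound ⟨q'⟩).symm


/-- Any region w.r.t. a larger removed set is contained in the support of a component
w.r.t. the smaller removed set. -/
lemma region_mono_subset {T T' X' : Set V} (hX' : Region G T' X') (hTT : T ⊆ T') :
    ∃ K : (G.induce Tᶜ).ConnectedComponent, X' ⊆ suppV K := by
  obtain ⟨x₀, hx₀⟩ := hX'.nonempty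
  have hx₀T : x₀ ∈ Tᶜ := fun h => hX'.disj hx₀ (hTT h)
  refine ⟨(G.induce Tᶜ).connectedComponentMk ⟨x₀, hx₀T⟩, ?_⟩
  intro y hy
  obtain ⟨p, hp⟩ := hX'.2.2.2 x₀ hx₀ y hy
  have hpT : ∀ z ∈ p.support, z ∈ Tᶜ := fun z hz => fun h => hX'.disj (hp z hz) (hTT h)
  have hyT : y ∈ Tᶜ := hpT y p.end_mem_support
  obtain ⟨q, -⟩ := toInduceWalk p hpT hx₀T hyT
  exact mem_suppV.mpr ⟨hyT, ((SimpleGraph.ConnectedComponent.sound ⟨q⟩).symm : _)⟩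

lemma ncard_le_card (X : Set V) : X.ncard ≤ Fintype.card V := by
  have := Set.ncard_le_ncard (Set.subset_univ X) (Set.finite_univ)
  simpa [Set.ncard_univ, Nat.card_eq_fintype_card] using this

/-- Two "big" regions, one w.r.t. a larger removed set, are nested. -/
lemma big_region_subset {T T' X X' : Set V} (hX : Region G T X) (hX' : Region G T' X')
    (hTT : T ⊆ T') (hbigX : 2 * Fintype.card V < 3 * X.ncard)
    (hbigX' : 2 * Fintype.card V < 3 * X'.ncard) : X' ⊆ X := by
  obtain ⟨K, hK⟩ := region_mono_subset hX' hTT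
  have hYreg := supp_region K
  rcases hX.eq_or_disjoint hYreg with h | h
  · rw [h]; exact hK
  · exfalso
    have hY : 2 * Fintype.card V < 3 * (suppV K).ncard :=
      lt_of_lt_of_le hbigX' (by
        have := Set.ncard_le_ncard hK (Set.toFinite _)
        omega)
    have hdisj : Disjoint X (suppV K) := Set.disjoint_iff_inter_eq_empty.mpr h
    have hsum : X.ncard + (suppV K).ncard = (X ∪ suppV K).ncard :=
      (Set.ncard_union_eq hdisj (Set.toFinite _) (Set.toFinite _)).symm
    have hle := ncard_le_card (X ∪ suppV K)
    omega

/-- Removing part of the removed set that has no edges to the region keeps it a region. -/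
lemma region_shrink_removed {T₁ T₂ X : Set V} (hX : Region G T₁ X) (hTT : T₂ ⊆ T₁)
    (hno : ∀ y ∈ T₁ \ T₂, ∀ x ∈ X, ¬ G.Adj x y) : Region G T₂ X := by
  refine ⟨hX.nonempty, ?_, ?_, hX.2.2.2⟩
  · ext x
    simp only [Set.mem_inter_iff, Set.mem_empty_iff_false, iff_false, not_and]
    intro hx hxT
    exact hX.disj hx (hTT hxT)
  · intro x hx y hadj hyT
    by_cases hyT1 : y ∈ T₁
    · exact absurd hadj (hno y ⟨hyT1, hyT⟩ x hx)
    · exact hX.2.2.1 x hx y hadj hyT1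

/-! ### Balls -/

variable (G) in
/-- Ball of radius `r` around `v` inside `X`. -/
def ball (X : Set V) (v : V) : ℕ → Set V
  | 0 => {v}
  | (r+1) => ball X v r ∪ {y | y ∈ X ∧ ∃ x ∈ ball X v r, G.Adj x y}

section Ball

variable {T X : Set V} {v : V} (hreg : Region G T X) (hv : v ∈ X)

lemma ball_subset_succ (r : ℕ) : ball G X v r ⊆ ball G X v (r+1) := Set.subset_union_left

lemma ball_mono {r s : ℕ} (h : r ≤ s) : ball G X v r ⊆ ball G X v s := by
  induction s with
  | zero => simpa [Nat.le_zero.mp h] using subset_rfl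
  | succ s ih =>
      rcases Nat.lt_or_ge r (s+1) with h' | h'
      · exact (ih (Nat.lt_succ_iff.mp h')).trans (ball_subset_succ s)
      · have : r = s + 1 := le_antisymm h h'
        rw [this]

lemma ball_subset_X (hv : v ∈ X) : ∀ r, ball G X v r ⊆ X
  | 0 => by simpa [ball] using hv
  | (r+1) => by
      intro y hy
      rcases hy with hy | hy
      · exact ball_subset_X hv r hy
      · exact hy.1

lemma mem_ball_self (r : ℕ) : v ∈ ball G X v r :=
  ball_mono (Nat.zero_le r) (by simp [ball])

lemma ball_reach : ∀ r, ∀ u ∈ ball G X v r,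
    ∃ p : G.Walk v u, (∀ z ∈ p.support, z ∈ ball G X v r) ∧ p.length ≤ r
  | 0, u, hu => by
      have : u = v := by simpa [ball] using hu
      subst this
      exact ⟨SimpleGraph.Walk.nil, by simp [ball], by simp⟩
  | (r+1), u, hu => by
      rcases hu with hu | hu
      · obtain ⟨p, hp, hlen⟩ := ball_reach r u hu
        exact ⟨p, fun z hz => ball_subset_succ r (hp z hz), hlen.trans (Nat.le_succ r)⟩
      · obtain ⟨x, hx, hadj⟩ := hu.2
        obtain ⟨p, hp, hlen⟩ := ball_reach r x hx
        refine ⟨p.concat hadj, ?_, by simpa [SimpleGraph.Walk.length_concat] using hlen⟩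
        intro z hz
        rw [SimpleGraph.Walk.support_concat] at hz
        rcases List.mem_append.mp hz with hz | hz
        · exact ball_subset_succ r (hp z hz)
        · rw [List.mem_singleton] at hz
          subst hz; exact Or.inr ⟨hu.1, x, hx, hadj⟩

lemma ball_absorb : ∀ {a b : V} (p : G.Walk a b), (∀ z ∈ p.support, z ∈ X) →
    ∀ {r : ℕ}, a ∈ ball G X v r → b ∈ ball G X v (r + p.length) := by
  intro a b p
  induction p with
  | nil => intro _ r ha; simpa using ha
  | @cons a w b hadj p ih =>
      intro hp r ha
      have hw : w ∈ ball G X v (r+1) :=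
        Or.inr ⟨hp w (by simp [SimpleGraph.Walk.support_cons]), a, ha, hadj⟩
      have := ih (fun z hz => hp z (by simp [SimpleGraph.Walk.support_cons, hz])) hw
      simpa [SimpleGraph.Walk.length_cons, Nat.add_comm, Nat.add_assoc, Nat.add_left_comm]
        using this

lemma ball_stab (r : ℕ) (hstab : ball G X v (r+1) ⊆ ball G X v r) :
    ∀ s, ball G X v (r+s) ⊆ ball G X v r := by
  intro s
  induction s with
  | zero => exact subset_rfl
  | succ s ih =>
      intro y hy
      rcases hy with hy | hy
      · exact ih hy
      · obtain ⟨x, hx, hadj⟩ := hy.2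
        exact hstab (Or.inr ⟨hy.1, x, ih hx, hadj⟩)

include hreg hv in
lemma ball_eq_X_of_stab (r : ℕ) (hstab : ball G X v (r+1) \ ball G X v r = ∅) :
    X ⊆ ball G X v r := by
  have hstab' : ball G X v (r+1) ⊆ ball G X v r := by
    intro y hy
    by_contra hy'
    have : y ∈ ball G X v (r+1) \ ball G X v r := ⟨hy, hy'⟩
    rw [hstab] at this
    exact this
  intro u hu
  obtain ⟨p, hp⟩ := hreg.2.2.2 v hv u hu
  have := ball_absorb p hp (mem_ball_self 0)
  have h2 : u ∈ ball G X v (r + (0 + p.length)) := ball_mono (by omega) this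
  exact ball_stab r hstab' _ h2

include hreg hv in
/-- The ball is a region once we also remove the annulus around it. -/
lemma ball_region (r : ℕ) :
    Region G (T ∪ (ball G X v (r+1) \ ball G X v r)) (ball G X v r) := by
  refine ⟨⟨v, mem_ball_self r⟩, ?_, ?_, ?_⟩
  · ext x
    simp only [Set.mem_inter_iff, Set.mem_empty_iff_false, iff_false, not_and]
    intro hx hxT
    rcases hxT with hxT | hxA
    · exact hreg.disj (ball_subset_X hv r hx) hxT
    · exact hxA.2 hx
  · intro x hx y hadj hyT
    by_cases hyX : y ∈ X
    · have hy1 : y ∈ ball G X v (r+1) := Or.inr ⟨hyX, x, hx, hadj⟩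
      by_contra hy
      exact hyT (Or.inr ⟨hy1, hy⟩)
    · exfalso
      apply hyX
      have hxX : x ∈ X := ball_subset_X hv r hx
      by_contra hyX'
      have hyT' : y ∉ T := fun h => hyT (Or.inl h)
      exact hyX' (hreg.2.2.1 x hxX y hadj hyT')
  · intro x hx y hy
    obtain ⟨p, hp, -⟩ := ball_reach r x hx
    obtain ⟨p', hp', -⟩ := ball_reach r y hy
    refine ⟨p.reverse.append p', fun z hz => ?_⟩
    rcases (SimpleGraph.Walk.mem_support_append_iff _ _).mp hz with h | h
    · rw [SimpleGraph.Walk.support_reverse, List.mem_reverse] at h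
      exact hp z h
    · exact hp' z h

end Ball


/-! ### Weight sums -/

noncomputable def wsum (w : V → ℚ) (A : Set V) : ℚ := ∑ x : V, if x ∈ A then w x else 0

section Wsum

variable {w : V → ℚ} {A B : Set V}

lemma wsum_nonneg (hw : ∀ x, 0 ≤ w x) (A : Set V) : 0 ≤ wsum w A :=
  Finset.sum_nonneg fun x _ => by by_cases h : x ∈ A <;> simp [h, hw x]

lemma wsum_mono (hw : ∀ x, 0 ≤ w x) (hAB : A ⊆ B) : wsum w A ≤ wsum w B := by
  apply Finset.sum_le_sum
  intro x _
  by_cases h : x ∈ A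
  · simp [h, hAB h]
  · by_cases h' : x ∈ B <;> simp [h, h', hw x]

lemma wsum_union_disjoint (hAB : A ∩ B = ∅) :
    wsum w (A ∪ B) = wsum w A + wsum w B := by
  rw [wsum, wsum, wsum, ← Finset.sum_add_distrib]
  apply Finset.sum_congr rfl
  intro x _
  by_cases hA : x ∈ A
  · have hB : x ∉ B := fun hB => by
      have : x ∈ A ∩ B := ⟨hA, hB⟩
      rw [hAB] at this; exact this
    simp [hA, hB]
  · by_cases hB : x ∈ B <;> simp [hA, hB]

lemma wsum_univ : wsum w Set.univ = ∑ x : V, w x := by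
  simp [wsum]

lemma wsum_le_univ (hw : ∀ x, 0 ≤ w x) (A : Set V) : wsum w A ≤ ∑ x : V, w x := by
  rw [← wsum_univ]
  exact wsum_mono hw (Set.subset_univ A)

lemma wsum_toFinset (A : Set V) : ∑ v ∈ A.toFinset, w v = wsum w A := by
  rw [wsum, ← Finset.sum_filter]
  apply Finset.sum_congr
  · ext x; simp
  · intros; rfl

lemma ncard_le_wsum {c : ℚ} (hc : ∀ x, c ≤ w x) (hcpos : 0 ≤ c) (A : Set V) :
    (A.ncard : ℚ) * c ≤ wsum w A := by
  rw [← wsum_toFinset, Set.ncard_eq_toFinset_card']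
  have := Finset.card_nsmul_le_sum A.toFinset w c (fun x _ => hc x)
  rwa [nsmul_eq_mul] at this

end Wsum

/-! ### The measure μ -/

noncomputable def mu (q : V → ℚ) (n : ℕ) (v : V) : ℚ :=
  (if (∑ x : V, q x) = 0 then 0 else q v / (2 * (∑ x : V, q x))) + 1 / (2 * n)

section Mu

variable {q : V → ℚ} {n : ℕ} (hq : ∀ x, 0 ≤ q x) (hn : 1 ≤ n) (hcard : Fintype.card V ≤ n)

include hq in
lemma Qtot_nonneg : (0:ℚ) ≤ ∑ x : V, q x := Finset.sum_nonneg fun x _ => hq x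

include hq in
lemma mu_lower (v : V) : 1 / (2 * (n:ℚ)) ≤ mu q n v := by
  unfold mu
  have h2 : (0:ℚ) ≤ (if (∑ x : V, q x) = 0 then 0 else q v / (2 * (∑ x : V, q x))) := by
    split
    · exact le_refl 0
    · rename_i h
      have hQ : 0 < ∑ x : V, q x := lt_of_le_of_ne (Qtot_nonneg hq) (Ne.symm h)
      exact div_nonneg (hq v) (by positivity)
  linarith

include hq in
lemma mu_nonneg (v : V) : 0 ≤ mu q n v := by
  unfold mu
  have h2 : (0:ℚ) ≤ (if (∑ x : V, q x) = 0 then 0 else q v / (2 * (∑ x : V, q x))) := by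
    split
    · exact le_refl 0
    · rename_i h
      have hQ : 0 < ∑ x : V, q x := lt_of_le_of_ne (Qtot_nonneg hq) (Ne.symm h)
      exact div_nonneg (hq v) (by positivity)
  have h3 : (0:ℚ) ≤ 1 / (2*n) := by positivity
  linarith

include hq in
lemma q_le_mu (v : V) : q v ≤ 2 * (∑ x : V, q x) * mu q n v := by
  unfold mu
  by_cases h : (∑ x : V, q x) = 0
  · have hv : q v = 0 := by
      have := Finset.sum_eq_zero_iff_of_nonneg (fun x _ => hq x) |>.mp h
      exact this v (Finset.mem_univ v)
    simp [h, hv]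
  · have hQ : 0 < ∑ x : V, q x := lt_of_le_of_ne (Qtot_nonneg hq) (Ne.symm h)
    have hnn : (0:ℚ) ≤ 1 / (2*n) := by positivity
    have : 2 * (∑ x : V, q x) * (q v / (2 * (∑ x : V, q x))) = q v := by
      field_simp
    simp only [h, if_false]
    nlinarith [mul_nonneg (le_of_lt hQ) hnn]

include hq hn hcard in
lemma musum_univ_le : wsum (mu q n) Set.univ ≤ 1 := by
  rw [wsum_univ]
  unfold mu
  rw [Finset.sum_add_distrib]
  have h1 : ∑ x : V, (if (∑ y : V, q y) = 0 then 0 else q x / (2 * (∑ y : V, q y)))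
      ≤ 1/2 := by
    by_cases h : (∑ y : V, q y) = 0
    · simp [h]
    · have hQ : 0 < ∑ y : V, q y := lt_of_le_of_ne (Qtot_nonneg hq) (Ne.symm h)
      simp only [h, if_false]
      rw [← Finset.sum_div]
      rw [div_le_iff₀ (by positivity)]
      linarith
  have h2 : ∑ _x : V, (1:ℚ) / (2*n) ≤ 1/2 := by
    rw [Finset.sum_const, nsmul_eq_mul, Finset.card_univ]
    have hnq : (0:ℚ) < n := by exact_mod_cast hn
    have hcardq : (Fintype.card V : ℚ) ≤ n := by exact_mod_cast hcard
    rw [mul_one_div, div_le_iff₀ (by positivity)]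
    linarith
  linarith

end Mu

/-! ### Bernoulli-type bound -/

lemma bernoulli_pow {ℓ : ℕ} (hℓ : 1 ≤ ℓ) (c : ℕ) :
    (2:ℚ)^c ≤ ((8*ℓ+1 : ℚ)/(8*ℓ))^(8*ℓ*c) := by
  have hℓQ : (0:ℚ) < 8*ℓ := by positivity
  have key : (2:ℚ) ≤ ((8*ℓ+1 : ℚ)/(8*ℓ))^(8*ℓ) := by
    have hx0 : (0:ℚ) ≤ 1/(8*ℓ) := by positivity
    have hx : (-2:ℚ) ≤ 1/(8*ℓ) := by linarith
    have := one_add_mul_le_pow hx (8*ℓ)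
    have heq : (1:ℚ) + (8*ℓ:ℕ) * (1/(8*ℓ)) = 2 := by
      push_cast
      field_simp
      norm_num
    have heq2 : (1:ℚ) + 1/(8*ℓ) = (8*ℓ+1)/(8*ℓ) := by
      field_simp
    rw [heq, heq2] at this
    exact this
  calc (2:ℚ)^c ≤ (((8*ℓ+1 : ℚ)/(8*ℓ))^(8*ℓ))^c := by
        apply pow_le_pow_left₀ (by norm_num) key
      _ = ((8*ℓ+1 : ℚ)/(8*ℓ))^(8*ℓ*c) := by rw [← pow_mul]


/-! ### Annulus -/

variable (G) in
def annulus (X : Set V) (v : V) (r : ℕ) : Set V :=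
  ball G X v (r+1) \ ball G X v r

lemma ball_union_annulus {X : Set V} {v : V} (r : ℕ) :
    ball G X v (r+1) = ball G X v r ∪ annulus G X v r := by
  rw [annulus, Set.union_diff_self, Set.union_eq_self_of_subset_left (ball_subset_succ r)]

lemma ball_inter_annulus {X : Set V} {v : V} (r : ℕ) :
    ball G X v r ∩ annulus G X v r = ∅ := by
  rw [annulus]
  ext x
  simp only [Set.mem_inter_iff, Set.mem_diff, Set.mem_empty_iff_false, iff_false, not_and]
  tauto

lemma diff_ball_split {X : Set V} {v : V} (hv : v ∈ X) (r : ℕ) :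
    X \ ball G X v r = annulus G X v r ∪ (X \ ball G X v (r+1)) := by
  ext x
  simp only [Set.mem_diff, Set.mem_union, annulus]
  constructor
  · rintro ⟨hx, hnb⟩
    by_cases h : x ∈ ball G X v (r+1)
    · exact Or.inl ⟨h, hnb⟩
    · exact Or.inr ⟨hx, h⟩
  · rintro (⟨hb, hnb⟩ | ⟨hx, hnb⟩)
    · exact ⟨ball_subset_X hv (r+1) hb, hnb⟩
    · exact ⟨hx, fun h => hnb (ball_subset_succ r h)⟩

lemma annulus_inter_diff {X : Set V} {v : V} (r : ℕ) :
    annulus G X v r ∩ (X \ ball G X v (r+1)) = ∅ := by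
  ext x
  simp only [Set.mem_inter_iff, Set.mem_diff, Set.mem_empty_iff_false, iff_false, annulus]
  tauto

lemma wsum_singleton {w : V → ℚ} (v : V) : wsum w {v} = w v := by
  rw [wsum]
  simp

lemma ball_zero {X : Set V} {v : V} : ball G X v 0 = {v} := rfl

/-! ### Touching -/

variable (G) in
def touches (b A : Set V) : Prop := ∃ y ∈ b, ∃ x ∈ A, G.Adj y x

/-! ### The stopping lemma -/

theorem stop_exists {T X : Set V} {v : V} {q : V → ℚ} {ℓ n : ℕ} {BS : List (Set V)}
    (hq : ∀ x, 0 ≤ q x) (hℓ : 1 ≤ ℓ) (hn : n = Fintype.card V)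
    (hreg : Region G T X) (hv : v ∈ X) (hbig : 2*n < 3*X.ncard)
    (htouch : ∀ b ∈ BS, touches G b X) :
    ∃ r ≤ 2*(8*ℓ*(Nat.clog 2 (n+1)+1))+2,
      (∀ b ∈ BS, touches G b (ball G X v r)) ∨
      ((¬ ∀ b ∈ BS, touches G b (ball G X v r)) ∧ 3*(ball G X v r).ncard ≤ 2*n ∧
        8*ℓ*(wsum (mu q n) (annulus G X v r)) ≤ wsum (mu q n) (ball G X v r)) ∨
      ((¬ ∀ b ∈ BS, touches G b (ball G X v r)) ∧ 2*n < 3*(ball G X v r).ncard ∧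
        8*ℓ*(wsum (mu q n) (annulus G X v r)) ≤ wsum (mu q n) (X \ ball G X v (r+1))) := by
  set D := 8*ℓ*(Nat.clog 2 (n+1)+1) with hD
  have hXpos : 1 ≤ X.ncard := by omega
  have hn1 : 1 ≤ n := by
    have := ncard_le_card X
    omega
  have hcard : Fintype.card V ≤ n := le_of_eq hn.symm
  have hmu0 : ∀ x, 0 ≤ mu q n x := mu_nonneg hq
  have hnq : (0:ℚ) < n := by exact_mod_cast hn1
  have hμlow : ∀ A : Set V, A.Nonempty → 1/(2*(n:ℚ)) ≤ wsum (mu q n) A := by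
    intro A hA
    have h1 : 1 ≤ A.ncard := by
      rw [Nat.one_le_iff_ne_zero, Ne, Set.ncard_eq_zero (Set.toFinite A)]
      exact Set.nonempty_iff_ne_empty.mp hA
    have := ncard_le_wsum (w := mu q n) (c := 1/(2*(n:ℚ))) (mu_lower hq) (by positivity) A
    have h2 : (1:ℚ) * (1/(2*(n:ℚ))) ≤ (A.ncard:ℚ) * (1/(2*(n:ℚ))) := by
      apply mul_le_mul_of_nonneg_right _ (by positivity)
      exact_mod_cast h1
    linarith
  have hμXone : wsum (mu q n) X ≤ 1 :=
    le_trans (wsum_mono hmu0 (Set.subset_univ X)) (musum_univ_le hq hn1 hcard)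
  by_contra hcon
  push_neg at hcon
  have hNb : ∀ r, r ≤ 2*D+2 → ∃ b ∈ BS, ¬ touches G b (ball G X v r) :=
    fun r hr => (hcon r hr).1
  have hheavyP : ∀ r, r ≤ 2*D+2 → 3*(ball G X v r).ncard ≤ 2*n →
      wsum (mu q n) (ball G X v r) < 8*ℓ*(wsum (mu q n) (annulus G X v r)) :=
    fun r hr hsm => (hcon r hr).2.1 (hcon r hr).1 hsm
  have hheavyO : ∀ r, r ≤ 2*D+2 → 2*n < 3*(ball G X v r).ncard →
      wsum (mu q n) (X \ ball G X v (r+1)) < 8*ℓ*(wsum (mu q n) (annulus G X v r)) :=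
    fun r hr hbg => (hcon r hr).2.2 (hcon r hr).1 hbg
  set t := ((8*ℓ+1:ℚ)/(8*ℓ)) with ht
  have hLpos : (0:ℚ) < 8*ℓ := by positivity
  have ht1 : 1 < t := by
    rw [ht, lt_div_iff₀ hLpos]
    linarith
  have ht0 : (0:ℚ) < t := lt_trans one_pos ht1
  -- decomposition of measures
  have hsplitP : ∀ r, wsum (mu q n) (ball G X v (r+1)) =
      wsum (mu q n) (ball G X v r) + wsum (mu q n) (annulus G X v r) := by
    intro r
    rw [ball_union_annulus r]
    exact wsum_union_disjoint (ball_inter_annulus r)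
  have hsplitO : ∀ r, wsum (mu q n) (X \ ball G X v r) =
      wsum (mu q n) (annulus G X v r) + wsum (mu q n) (X \ ball G X v (r+1)) := by
    intro r
    rw [diff_ball_split hv r]
    exact wsum_union_disjoint (annulus_inter_diff r)
  -- growth phase
  have grow : ∀ r, r ≤ 2*D+2 → (∀ r' , r' < r → 3*(ball G X v r').ncard ≤ 2*n) →
      t^r * (1/(2*(n:ℚ))) ≤ wsum (mu q n) (ball G X v r) := by
    intro r
    induction r with
    | zero =>
        intro _ _
        rw [pow_zero, one_mul, ball_zero, wsum_singleton]
        exact mu_lower hq v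
    | succ r ih =>
        intro hr hsmall
        have ihr := ih (by omega) (fun r' h => hsmall r' (by omega))
        have hsm := hsmall r (by omega)
        have hheavy := hheavyP r (by omega) hsm
        have hannp : wsum (mu q n) (ball G X v r) / (8*ℓ) ≤ wsum (mu q n) (annulus G X v r) := by
          rw [div_le_iff₀ hLpos]
          nlinarith
        have hbp : 0 ≤ wsum (mu q n) (ball G X v r) := wsum_nonneg hmu0 _
        have step : t * wsum (mu q n) (ball G X v r) ≤ wsum (mu q n) (ball G X v (r+1)) := by
          rw [hsplitP r, ht]
          have : (8*ℓ+1:ℚ)/(8*ℓ) * wsum (mu q n) (ball G X v r)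
              = wsum (mu q n) (ball G X v r) + wsum (mu q n) (ball G X v r)/(8*ℓ) := by
            field_simp
          rw [this]
          linarith
        calc t^(r+1) * (1/(2*(n:ℚ))) = t * (t^r * (1/(2*(n:ℚ)))) := by ring
          _ ≤ t * wsum (mu q n) (ball G X v r) := by
              apply mul_le_mul_of_nonneg_left ihr (le_of_lt ht0)
          _ ≤ wsum (mu q n) (ball G X v (r+1)) := step
  -- the ball gets big within D steps
  have hpowD : (2:ℚ) * (n+1) ≤ t^D := by
    have h1 := bernoulli_pow hℓ (Nat.clog 2 (n+1)+1)
    have h2 : (n+1:ℕ) ≤ 2^(Nat.clog 2 (n+1)) := Nat.le_pow_clog one_lt_two (n+1)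
    have h2q : ((n:ℚ)+1) ≤ (2:ℚ)^(Nat.clog 2 (n+1)) := by exact_mod_cast h2
    have h3 : (2:ℚ)^(Nat.clog 2 (n+1)+1) = 2 * (2:ℚ)^(Nat.clog 2 (n+1)) := by ring
    rw [hD]
    calc (2:ℚ) * (n+1) ≤ 2 * (2:ℚ)^(Nat.clog 2 (n+1)) := by linarith
      _ = (2:ℚ)^(Nat.clog 2 (n+1)+1) := h3.symm
      _ ≤ t^(8*ℓ*(Nat.clog 2 (n+1)+1)) := h1
  have hbigball : ∃ r, 2*n < 3*(ball G X v r).ncard := by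
    by_contra h
    push_neg at h
    have hgrow := grow D (by omega) (fun r' _ => h r')
    have hle : wsum (mu q n) (ball G X v D) ≤ 1 :=
      le_trans (wsum_mono hmu0 (ball_subset_X hv D)) hμXone
    have := mul_le_mul_of_nonneg_right hpowD (show (0:ℚ) ≤ 1/(2*(n:ℚ)) by positivity)
    have hgt : (1:ℚ) < (2*((n:ℚ)+1)) * (1/(2*(n:ℚ))) := by
      have heq : (2*((n:ℚ)+1)) * (1/(2*(n:ℚ))) = ((n:ℚ)+1)/n := by
        field_simp
      rw [heq, lt_div_iff₀ hnq]
      linarith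
    linarith
  -- first radius where the ball is big
  set r₁ := Nat.find hbigball with hr₁def
  have hr₁spec : 2*n < 3*(ball G X v r₁).ncard := Nat.find_spec hbigball
  have hr₁le : r₁ ≤ D := by
    by_contra h
    push_neg at h
    have hsm : ∀ r' , r' < r₁ → 3*(ball G X v r').ncard ≤ 2*n := by
      intro r' hr'
      have := Nat.find_min hbigball hr'
      omega
    have hgrow := grow D (by omega) (fun r' hr' => hsm r' (by omega))
    have hle : wsum (mu q n) (ball G X v D) ≤ 1 :=
      le_trans (wsum_mono hmu0 (ball_subset_X hv D)) hμXone
    have hmono := mul_le_mul_of_nonneg_right hpowD (show (0:ℚ) ≤ 1/(2*(n:ℚ)) by positivity)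
    have hgt : (1:ℚ) < (2*((n:ℚ)+1)) * (1/(2*(n:ℚ))) := by
      have heq : (2*((n:ℚ)+1)) * (1/(2*(n:ℚ))) = ((n:ℚ)+1)/n := by
        field_simp
      rw [heq, lt_div_iff₀ hnq]
      linarith
    linarith
  have hbigr : ∀ r, r₁ ≤ r → 2*n < 3*(ball G X v r).ncard := by
    intro r hr
    have := Set.ncard_le_ncard (ball_mono (v := v) (X := X) (G := G) hr) (Set.toFinite _)
    omega
  -- decay phase
  have decay : ∀ j, j ≤ D → t^j * wsum (mu q n) (X \ ball G X v (r₁+j)) ≤ 1 := by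
    intro j
    induction j with
    | zero =>
        intro _
        rw [pow_zero, one_mul]
        exact le_trans (wsum_mono hmu0 Set.diff_subset) hμXone
    | succ j ih =>
        intro hj
        have ihj := ih (by omega)
        have hr : r₁ + j ≤ 2*D+2 := by omega
        have hbg := hbigr (r₁+j) (by omega)
        have hhev := hheavyO (r₁+j) hr hbg
        have hsplit := hsplitO (r₁+j)
        have hup : 0 ≤ wsum (mu q n) (X \ ball G X v (r₁+j+1)) := wsum_nonneg hmu0 _
        have hstep : t * wsum (mu q n) (X \ ball G X v (r₁+j+1)) ≤
            wsum (mu q n) (X \ ball G X v (r₁+j)) := by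
          rw [ht]
          have heq : (8*ℓ+1:ℚ)/(8*ℓ) * wsum (mu q n) (X \ ball G X v (r₁+j+1))
              = wsum (mu q n) (X \ ball G X v (r₁+j+1))
                + wsum (mu q n) (X \ ball G X v (r₁+j+1))/(8*ℓ) := by
            field_simp
          rw [heq]
          have : wsum (mu q n) (X \ ball G X v (r₁+j+1))/(8*ℓ) ≤
              wsum (mu q n) (annulus G X v (r₁+j)) := by
            rw [div_le_iff₀ hLpos]
            nlinarith
          linarith
        have htj : (0:ℚ) ≤ t^j := le_of_lt (pow_pos ht0 j)
        calc t^(j+1) * wsum (mu q n) (X \ ball G X v (r₁+(j+1)))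
            = t^j * (t * wsum (mu q n) (X \ ball G X v (r₁+j+1))) := by
              rw [← Nat.add_assoc]; ring
          _ ≤ t^j * wsum (mu q n) (X \ ball G X v (r₁+j)) :=
              mul_le_mul_of_nonneg_left hstep htj
          _ ≤ 1 := ihj
  -- conclude : X is covered by the ball of radius r₁ + D
  have hcover : X \ ball G X v (r₁+D) = ∅ := by
    by_contra h
    have hne : (X \ ball G X v (r₁+D)).Nonempty := Set.nonempty_iff_ne_empty.mpr h
    have hlow := hμlow _ hne
    have hdec := decay D (le_refl D)
    have hDprod : (2*((n:ℚ)+1)) * (1/(2*(n:ℚ))) ≤ t^D * wsum (mu q n) (X \ ball G X v (r₁+D)) := by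
      apply mul_le_mul hpowD hlow (by positivity) (le_of_lt (pow_pos ht0 D))
    have hgt : (1:ℚ) < (2*((n:ℚ)+1)) * (1/(2*(n:ℚ))) := by
      have heq : (2*((n:ℚ)+1)) * (1/(2*(n:ℚ))) = ((n:ℚ)+1)/n := by
        field_simp
      rw [heq, lt_div_iff₀ hnq]
      linarith
    linarith
  have hsub : X ⊆ ball G X v (r₁+D) := by
    intro x hx
    by_contra h
    have : x ∈ X \ ball G X v (r₁+D) := ⟨hx, h⟩
    rw [hcover] at this
    exact this
  obtain ⟨b, hb, hnt⟩ := hNb (r₁+D) (by omega)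
  obtain ⟨y, hy, x, hx, hadj⟩ := htouch b hb
  exact hnt ⟨y, hy, x, hsub hx, hadj⟩


/-! ### Rooted sets and branch sets -/

variable (G) in
/-- every vertex of `B` is reachable from `v` within `B` by a walk of length at most `d`. -/
def Rooted (v : V) (d : ℕ) (B : Set V) : Prop :=
  v ∈ B ∧ ∀ u ∈ B, ∃ p : G.Walk v u, (∀ z ∈ p.support, z ∈ B) ∧ p.length ≤ d

lemma Rooted.mono_d {v : V} {d d' : ℕ} {B : Set V} (h : Rooted G v d B) (hd : d ≤ d') :
    Rooted G v d' B := by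
  refine ⟨h.1, fun u hu => ?_⟩
  obtain ⟨p, hp, hlen⟩ := h.2 u hu
  exact ⟨p, hp, hlen.trans hd⟩

lemma Rooted.union {v : V} {d : ℕ} {B B' : Set V} (h : Rooted G v d B) (h' : Rooted G v d B') :
    Rooted G v d (B ∪ B') := by
  refine ⟨Or.inl h.1, fun u hu => ?_⟩
  rcases hu with hu | hu
  · obtain ⟨p, hp, hlen⟩ := h.2 u hu
    exact ⟨p, fun z hz => Or.inl (hp z hz), hlen⟩
  · obtain ⟨p, hp, hlen⟩ := h'.2 u hu
    exact ⟨p, fun z hz => Or.inr (hp z hz), hlen⟩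

lemma Rooted.singleton (v : V) (d : ℕ) : Rooted G v d {v} :=
  ⟨rfl, fun u hu => by
    have : u = v := hu
    subst this
    exact ⟨SimpleGraph.Walk.nil, by simp, by simp⟩⟩

lemma Rooted.walkSupport {v x : V} {d : ℕ} (p : G.Walk v x) (hlen : p.length ≤ d) :
    Rooted G v d {z | z ∈ p.support} := by
  refine ⟨p.start_mem_support, fun u hu => ?_⟩
  classical
  refine ⟨p.takeUntil u hu, fun z hz => p.support_takeUntil_subset hu hz,
    (p.length_takeUntil_le hu).trans hlen⟩

variable (G) in
/-- branch set property needed for `CliqueModel`. -/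
def BranchOK (d : ℕ) (b : Set V) : Prop :=
  (G.induce b).Connected ∧ (∃ v : b, ∀ u : b, (G.induce b).dist v u ≤ d)

lemma Rooted.branchOK {v : V} {d : ℕ} {B : Set V} (h : Rooted G v d B) : BranchOK G d B := by
  have hreach : ∀ u : B, ∃ q : (G.induce B).Walk ⟨v, h.1⟩ u, q.length ≤ d := by
    rintro ⟨u, hu⟩
    obtain ⟨p, hp, hlen⟩ := h.2 u hu
    obtain ⟨q, hq⟩ := toInduceWalk p hp h.1 hu
    exact ⟨q, hq ▸ hlen⟩
  constructor
  · rw [SimpleGraph.connected_iff]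
    constructor
    · intro x y
      obtain ⟨qx, -⟩ := hreach x
      obtain ⟨qy, -⟩ := hreach y
      exact (SimpleGraph.Walk.reachable qx).symm.trans (SimpleGraph.Walk.reachable qy)
    · exact ⟨⟨v, h.1⟩⟩
  · refine ⟨⟨v, h.1⟩, fun u => ?_⟩
    obtain ⟨q, hq⟩ := hreach u
    exact le_trans (SimpleGraph.dist_le q) hq

/-! ### Touching lemmas -/

lemma touches_mono {b A A' : Set V} (h : touches G b A) (hAA : A ⊆ A') : touches G b A' := by
  obtain ⟨y, hy, x, hx, hadj⟩ := h
  exact ⟨y, hy, x, hAA hx, hadj⟩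

lemma touches_swap {b b' : Set V} (h : touches G b b') : touches G b' b := by
  obtain ⟨y, hy, x, hx, hadj⟩ := h
  exact ⟨x, hx, y, hy, hadj.symm⟩

/-! ### Lists of branch sets -/

variable (G) in
def PairOK (b b' : Set V) : Prop := Disjoint b b' ∧ touches G b b'

def SupL (BS : List (Set V)) : Set V := {x | ∃ b ∈ BS, x ∈ b}

lemma SupL_nil : SupL ([] : List (Set V)) = ∅ := by
  ext x; simp [SupL]

lemma SupL_cons (b : Set V) (BS : List (Set V)) : SupL (b :: BS) = b ∪ SupL BS := by
  ext x; simp [SupL]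

lemma subset_SupL {b : Set V} {BS : List (Set V)} (hb : b ∈ BS) : b ⊆ SupL BS :=
  fun x hx => ⟨b, hb, hx⟩

lemma SupL_sublist {BS BS' : List (Set V)} (h : BS.Sublist BS') : SupL BS ⊆ SupL BS' := by
  rintro x ⟨b, hb, hx⟩
  exact ⟨b, h.mem hb, hx⟩

/-- Build a `CliqueModel` from a suitable list of branch sets. -/
noncomputable def listToModel (d : ℕ) (BS : List (Set V)) (m : ℕ) (hm : BS.length = m)
    (hpair : BS.Pairwise (PairOK G)) (hbr : ∀ b ∈ BS, BranchOK G d b) :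
    CliqueModel G m d where
  B := fun i => BS.get (Fin.cast hm.symm i)
  disj := by
    intro i j hij
    have hij' : (Fin.cast hm.symm i) ≠ (Fin.cast hm.symm j) := by
      simp only [ne_eq, Fin.ext_iff] at hij ⊢
      exact hij
    rcases lt_or_gt_of_ne hij' with h | h
    · exact (List.pairwise_iff_get.mp hpair _ _ h).1
    · exact ((List.pairwise_iff_get.mp hpair _ _ h).1).symm
  conn := fun i => (hbr _ (BS.get_mem _)).1
  rad := fun i => (hbr _ (BS.get_mem _)).2
  adj := by
    intro i j hij
    have h : (Fin.cast hm.symm i) < (Fin.cast hm.symm j) := hij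
    exact (List.pairwise_iff_get.mp hpair _ _ h).2

lemma listToModel_support (d : ℕ) (BS : List (Set V)) (m : ℕ) (hm : BS.length = m)
    (hpair : BS.Pairwise (PairOK G)) (hbr : ∀ b ∈ BS, BranchOK G d b) :
    (listToModel d BS m hm hpair hbr).support = SupL BS := by
  ext x
  simp only [CliqueModel.support, listToModel, Set.mem_iUnion, SupL, Set.mem_setOf_eq]
  constructor
  · rintro ⟨i, hi⟩
    exact ⟨_, BS.get_mem _, hi⟩
  · rintro ⟨b, hb, hx⟩
    obtain ⟨i, rfl⟩ := List.mem_iff_get.mp hb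
    exact ⟨Fin.cast hm i, hx⟩

/-- Any clique model has at most `|V|` branch sets. -/
lemma model_le_card (d m : ℕ) (M : CliqueModel G m d) : m ≤ Fintype.card V := by
  have hne : ∀ i, (M.B i).Nonempty := by
    intro i
    have := (M.conn i).nonempty
    obtain ⟨⟨x, hx⟩⟩ := this
    exact ⟨x, hx⟩
  choose f hf using hne
  have hinj : Function.Injective f := by
    intro i j hij
    by_contra h
    have := M.disj i j h
    exact Set.disjoint_left.mp this (hf i) (hij ▸ hf j)
  simpa using Fintype.card_le_of_injective f hinj

lemma le_omegaDepth (d m : ℕ) (M : CliqueModel G m d) : m ≤ omegaDepth G d := by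
  apply le_csSup
  · refine ⟨Fintype.card V, ?_⟩
    rintro k ⟨Mk⟩
    exact model_le_card d k Mk
  · exact ⟨M⟩

/-! ### Building a new branch set -/

lemma build_branch {T X : Set V} {v : V} (hreg : Region G T X) (hv : v ∈ X) (r : ℕ)
    (BS : List (Set V)) (hNb : ∀ b ∈ BS, touches G b (ball G X v r)) :
    ∃ Bnew : Set V, Bnew ⊆ ball G X v r ∧ v ∈ Bnew ∧ Rooted G v r Bnew ∧
      Bnew.ncard ≤ BS.length * (r+1) + 1 ∧ ∀ b ∈ BS, touches G b Bnew := by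
  induction BS with
  | nil =>
      refine ⟨{v}, ?_, rfl, Rooted.singleton v r, ?_, by simp⟩
      · intro z hz
        have : z = v := hz
        subst this
        exact mem_ball_self r
      · simp
  | cons b BS ih =>
      obtain ⟨Bnew, hsub, hvB, hroot, hcard, htch⟩ :=
        ih (fun b' hb' => hNb b' (List.mem_cons_of_mem b hb'))
      obtain ⟨y, hy, x, hx, hadj⟩ := hNb b (List.mem_cons_self)
      obtain ⟨p, hp, hlen⟩ := ball_reach r x hx
      refine ⟨Bnew ∪ {z | z ∈ p.support}, ?_, Or.inl hvB, ?_, ?_, ?_⟩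
      · intro z hz
        rcases hz with hz | hz
        · exact hsub hz
        · exact hp z hz
      · exact hroot.union (Rooted.walkSupport p hlen)
      · have h1 : ({z | z ∈ p.support} : Set V).ncard ≤ r + 1 := by
          have : ({z | z ∈ p.support} : Set V) = ↑p.support.toFinset := by
            ext z; simp
          rw [this]
          have hc := p.support.toFinset_card_le
          have hl : p.support.length = p.length + 1 := SimpleGraph.Walk.length_support p
          have := Set.ncard_coe_finset p.support.toFinset
          omega
        have := Set.ncard_union_le Bnew {z | z ∈ p.support}
        have hll : (b :: BS).length = BS.length + 1 := rfl
        rw [hll]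
        have h2 : (Bnew ∪ {z | z ∈ p.support}).ncard ≤ BS.length * (r+1) + 1 + (r+1) := by
          omega
        have hexp : (BS.length+1)*(r+1) = BS.length*(r+1) + (r+1) := by ring
        omega
      · intro b' hb'
        rcases List.mem_cons.mp hb' with rfl | hb'
        · exact ⟨y, hy, x, Or.inr p.end_mem_support, hadj⟩
        · exact touches_mono (htch b' hb') Set.subset_union_left


/-! ### More wsum lemmas -/

lemma wsum_le_wsum {w w' : V → ℚ} (h : ∀ x, w x ≤ w' x) (A : Set V) :
    wsum w A ≤ wsum w' A := by
  apply Finset.sum_le_sum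
  intro x _
  by_cases hx : x ∈ A <;> simp [hx, h x]

lemma wsum_smul (c : ℚ) (w : V → ℚ) (A : Set V) :
    wsum (fun x => c * w x) A = c * wsum w A := by
  rw [wsum, wsum, Finset.mul_sum]
  apply Finset.sum_congr rfl
  intro x _
  by_cases hx : x ∈ A <;> simp [hx]

lemma wsum_empty (w : V → ℚ) : wsum w (∅ : Set V) = 0 := by
  simp [wsum]

/-! ### The main goal proposition -/

variable (G) in
def GoalP (q : V → ℚ) (ℓ m₀ d : ℕ) : Prop :=
  (∃ M : CliqueModel G m₀ d, M.Bounded m₀) ∨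
  (∃ (C M : Finset V) (m : ℕ) (Mod : CliqueModel G m d),
    Disjoint C M ∧
    IsBalancedSeparator G (↑C ∪ ↑M) ∧
    (∑ v ∈ C, q v) ≤ (∑ v : V, q v) / (ℓ : ℚ) ∧
    m ≤ min m₀ (omegaDepth G d) ∧
    Mod.support = ↑M ∧
    Mod.Bounded (min m₀ (omegaDepth G d)))

/-! ### Concluding (termination of the iteration) -/

lemma conclude {q : V → ℚ} {ℓ m₀ : ℕ} (d : ℕ) (hq : ∀ x, 0 ≤ q x) (hℓ : 1 ≤ ℓ)
    (C : Set V) (BS : List (Set V))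
    (hpair : BS.Pairwise (PairOK G)) (hbr : ∀ b ∈ BS, BranchOK G d b)
    (hsize : ∀ b ∈ BS, b.ncard ≤ min m₀ (omegaDepth G d) * d)
    (hlen : BS.length ≤ m₀)
    (hCdisj : C ∩ SupL BS = ∅)
    (hqC : 8*ℓ*(wsum q C) ≤ 2*(∑ x : V, q x))
    (hbal : ∀ X, Region G (C ∪ SupL BS) X → 3*X.ncard ≤ 2*(Fintype.card V)) :
    GoalP G q ℓ m₀ d := by
  right
  have hω : BS.length ≤ omegaDepth G d :=
    le_omegaDepth d BS.length (listToModel (G := G) d BS BS.length rfl hpair hbr)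
  refine ⟨C.toFinset, (SupL BS).toFinset, BS.length,
    listToModel (G := G) d BS BS.length rfl hpair hbr, ?_, ?_, ?_, ?_, ?_, ?_⟩
  · rw [Finset.disjoint_left]
    intro a ha ha'
    rw [Set.mem_toFinset] at ha ha'
    have : a ∈ C ∩ SupL BS := ⟨ha, ha'⟩
    rw [hCdisj] at this
    exact this
  · have hEq : ((C.toFinset : Set V) ∪ ((SupL BS).toFinset : Set V)) = C ∪ SupL BS := by
      simp [Set.coe_toFinset]
    rw [hEq]
    intro K
    have h1 := hbal (suppV K) (supp_region K)
    have h2 : (suppV K).ncard = K.supp.ncard :=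
      Set.ncard_image_of_injective _ Subtype.val_injective
    rw [Nat.card_eq_fintype_card]
    omega
  · rw [wsum_toFinset]
    have hQ0 : (0:ℚ) ≤ ∑ x : V, q x := Qtot_nonneg hq
    have hw0 : (0:ℚ) ≤ wsum q C := wsum_nonneg hq C
    have hℓq : (0:ℚ) < ℓ := by exact_mod_cast hℓ
    rw [le_div_iff₀ hℓq]
    nlinarith
  · exact le_min hlen hω
  · rw [listToModel_support, Set.coe_toFinset]
  · intro i
    exact hsize _ (BS.get_mem _)

/-! ### Releasing branch sets that do not touch the new region -/

lemma region_release (C' : Set V) (BS' : List (Set V)) (X' : Set V)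
    (hreg' : Region G (C' ∪ SupL BS') X') :
    Region G (C' ∪ SupL (BS'.filter (fun b => decide (touches G b X')))) X' := by
  apply region_shrink_removed hreg'
  · exact Set.union_subset_union_right C' (SupL_sublist (List.filter_sublist))
  · rintro y ⟨hy1, hy2⟩ x hx hadj
    have hyC : y ∉ C' := fun h => hy2 (Or.inl h)
    rcases hy1 with h | h
    · exact hyC h
    obtain ⟨b, hb, hyb⟩ := h
    have hbk : ¬ touches G b X' := by
      intro ht
      exact hy2 (Or.inr ⟨b, List.mem_filter.mpr ⟨hb, by simpa using ht⟩, hyb⟩)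
    exact hbk ⟨y, hyb, x, hx, hadj.symm⟩

/-! ### The loop hypothesis -/

variable (G) in
def LoopHyp (q : V → ℚ) (ℓ m₀ d N : ℕ) : Prop :=
  ∀ (C : Set V) (BS : List (Set V)) (X : Set V), X.ncard ≤ N →
    Region G (C ∪ SupL BS) X →
    2*(Fintype.card V) < 3*X.ncard →
    BS.Pairwise (PairOK G) →
    (∀ b ∈ BS, BranchOK G d b) →
    (∀ b ∈ BS, b.ncard ≤ min m₀ (omegaDepth G d) * d) →
    (∀ b ∈ BS, touches G b X) →
    BS.length < m₀ →
    C ∩ SupL BS = ∅ →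
    8*ℓ*(wsum q C) ≤ 2*(∑ x : V, q x)*(wsum (mu q (Fintype.card V)) (Set.univ \ (X ∪ C))) →
    GoalP G q ℓ m₀ d

lemma finish_step {q : V → ℚ} {ℓ m₀ : ℕ} (hq : ∀ x, 0 ≤ q x) (hℓ : 1 ≤ ℓ) (d : ℕ) {N : ℕ}
    (ih : LoopHyp G q ℓ m₀ d N)
    (C' : Set V) (BS' : List (Set V))
    (hpair' : BS'.Pairwise (PairOK G)) (hbr' : ∀ b ∈ BS', BranchOK G d b)
    (hsize' : ∀ b ∈ BS', b.ncard ≤ min m₀ (omegaDepth G d) * d)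
    (hlen' : BS'.length < m₀)
    (hCdisj' : C' ∩ SupL BS' = ∅)
    (hqC : 8*ℓ*(wsum q C') ≤ 2*(∑ x : V, q x))
    (hprog : ∀ X', Region G (C' ∪ SupL BS') X' → 2*(Fintype.card V) < 3*X'.ncard →
        X'.ncard ≤ N ∧ 8*ℓ*(wsum q C') ≤
          2*(∑ x : V, q x)*(wsum (mu q (Fintype.card V)) (Set.univ \ (X' ∪ C')))) :
    GoalP G q ℓ m₀ d := by
  by_cases hbigex : ∃ X', Region G (C' ∪ SupL BS') X' ∧ 2*(Fintype.card V) < 3*X'.ncard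
  · obtain ⟨X', hX'reg, hX'big⟩ := hbigex
    have hsub'' : ∀ b ∈ BS'.filter (fun b => decide (touches G b X')), b ∈ BS' :=
      fun b hb => (List.mem_filter.mp hb).1
    refine ih C' (BS'.filter (fun b => decide (touches G b X'))) X'
      (hprog X' hX'reg hX'big).1
      (region_release C' BS' X' hX'reg) hX'big
      (List.Pairwise.sublist (List.filter_sublist) hpair')
      (fun b hb => hbr' b (hsub'' b hb))
      (fun b hb => hsize' b (hsub'' b hb))
      (fun b hb => by
        have := (List.mem_filter.mp hb).2
        simpa using this)
      (lt_of_le_of_lt (List.length_filter_le _ _) hlen')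
      ?_
      (hprog X' hX'reg hX'big).2
    ext x
    simp only [Set.mem_inter_iff, Set.mem_empty_iff_false, iff_false, not_and]
    intro hxC hxS
    have : x ∈ C' ∩ SupL BS' :=
      ⟨hxC, SupL_sublist (List.filter_sublist) hxS⟩
    rw [hCdisj'] at this
    exact this
  · push_neg at hbigex
    exact conclude d hq hℓ C' BS' hpair' hbr' hsize' (le_of_lt hlen') hCdisj' hqC
      (fun X hX => by
        have := hbigex X hX
        omega)


/-! ### The main loop -/

lemma main_loop {q : V → ℚ} {ℓ m₀ : ℕ} (hq : ∀ x, 0 ≤ q x) (hℓ : 1 ≤ ℓ) (d : ℕ)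
    (hd : d = 2*(8*ℓ*(Nat.clog 2 (Fintype.card V + 1)+1))+4) :
    ∀ N, LoopHyp G q ℓ m₀ d N := by
  intro N
  induction N with
  | zero =>
      intro C BS X hXN hreg hbig _ _ _ _ _ _ _
      omega
  | succ N ih =>
      intro C BS X hXN hreg hbig hpair hbr hsize htouch hlen hCdisj hqinv
      obtain ⟨v, hv⟩ := hreg.nonempty
      have hn1 : 1 ≤ Fintype.card V := by
        have h1 := ncard_le_card X
        omega
      have hQ0 : (0:ℚ) ≤ ∑ x : V, q x := Qtot_nonneg hq
      have hQ20 : (0:ℚ) ≤ 2*(∑ x : V, q x) := by linarith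
      have hmu0 : ∀ x, 0 ≤ mu q (Fintype.card V) x := mu_nonneg hq
      have hXC : ∀ x ∈ X, x ∉ C := fun x hx hxC => hreg.disj hx (Or.inl hxC)
      have hXS : ∀ x ∈ X, x ∉ SupL BS := fun x hx hxS => hreg.disj hx (Or.inr hxS)
      have hmuuniv : wsum (mu q (Fintype.card V)) Set.univ ≤ 1 := musum_univ_le hq hn1 le_rfl
      obtain ⟨r, hr, hstop⟩ := stop_exists hq hℓ rfl hreg hv hbig htouch
      have hrd : r + 1 ≤ d - 1 := by omega
      have hballX := ball_subset_X (G := G) hv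
      rcases hstop with hNb | ⟨hnNb, hsmall, hlight⟩ | ⟨hnNb, hbigP, hlight⟩
      · -- EXTEND: add a new branch set
        obtain ⟨Bnew, hBsub, hvB, hroot, hBcard, hBtouch⟩ := build_branch hreg hv r BS hNb
        have hBsubX : Bnew ⊆ X := fun x hx => hballX r (hBsub hx)
        have hBOK : BranchOK G d Bnew := (hroot.mono_d (by omega)).branchOK
        have hpair' : (Bnew :: BS).Pairwise (PairOK G) := by
          rw [List.pairwise_cons]
          refine ⟨fun b hb => ⟨?_, ?_⟩, hpair⟩
          · rw [Set.disjoint_left]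
            intro x hxB hxb
            exact hXS x (hBsubX hxB) (subset_SupL hb hxb)
          · exact touches_swap (hBtouch b hb)
        have hbr' : ∀ b ∈ Bnew :: BS, BranchOK G d b := by
          intro b hb
          rcases List.mem_cons.mp hb with rfl | hb
          · exact hBOK
          · exact hbr b hb
        have hω : BS.length + 1 ≤ omegaDepth G d :=
          le_omegaDepth d _ (listToModel (G := G) d (Bnew :: BS) (BS.length + 1) rfl hpair' hbr')
        have hBsize : Bnew.ncard ≤ (BS.length + 1) * d := by
          have h1 : BS.length * (r+1) ≤ BS.length * (d-1) := Nat.mul_le_mul_left BS.length hrd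
          have h2 : BS.length * (d-1) ≤ BS.length * d := Nat.mul_le_mul_left BS.length (Nat.sub_le d 1)
          have h3 : (BS.length+1)*d = BS.length*d + d := by ring
          omega
        by_cases hfull : BS.length + 1 = m₀
        · left
          refine ⟨listToModel (G := G) d (Bnew :: BS) m₀ (by simpa using hfull) hpair' hbr', ?_⟩
          have hb : ∀ b ∈ Bnew :: BS, b.ncard ≤ m₀ * d := by
            intro b hb
            rcases List.mem_cons.mp hb with rfl | hb
            · rw [← hfull]; exact hBsize
            · calc b.ncard ≤ min m₀ (omegaDepth G d) * d := hsize b hb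
                _ ≤ m₀ * d := Nat.mul_le_mul_right d (min_le_left _ _)
          intro i
          exact hb _ (List.get_mem _ _)
        · have hlen' : BS.length + 1 < m₀ := by omega
          have hminge : BS.length + 1 ≤ min m₀ (omegaDepth G d) := le_min (by omega) hω
          have hsize' : ∀ b ∈ Bnew :: BS, b.ncard ≤ min m₀ (omegaDepth G d) * d := by
            intro b hb
            rcases List.mem_cons.mp hb with rfl | hb
            · exact le_trans hBsize (Nat.mul_le_mul_right d hminge)
            · exact hsize b hb
          have hCdisj' : C ∩ SupL (Bnew :: BS) = ∅ := by
            rw [SupL_cons]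
            ext x
            simp only [Set.mem_inter_iff, Set.mem_union, Set.mem_empty_iff_false, iff_false,
              not_and]
            intro hxC hxU
            rcases hxU with hx | hx
            · exact hXC x (hBsubX hx) hxC
            · have : x ∈ C ∩ SupL BS := ⟨hxC, hx⟩
              rw [hCdisj] at this; exact this
          apply finish_step hq hℓ d ih C (Bnew :: BS) hpair' hbr' hsize' hlen' hCdisj'
          · have hsub1 : wsum (mu q (Fintype.card V)) (Set.univ \ (X ∪ C)) ≤ 1 :=
              le_trans (wsum_mono hmu0 Set.diff_subset) hmuuniv
            have := mul_le_mul_of_nonneg_left hsub1 hQ20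
            linarith
          · intro X' hX'reg hX'big
            have hTT : C ∪ SupL BS ⊆ C ∪ SupL (Bnew :: BS) := by
              rw [SupL_cons]
              exact Set.union_subset_union_right C Set.subset_union_right
            have hXsub : X' ⊆ X := big_region_subset hreg hX'reg hTT hbig hX'big
            have hvX' : v ∉ X' := fun hvX' =>
              hX'reg.disj hvX' (Or.inr ⟨Bnew, List.mem_cons_self, hvB⟩)
            have hss : X' ⊂ X := by
              rw [Set.ssubset_def]
              exact ⟨hXsub, fun h => hvX' (h hv)⟩
            have hlt : X'.ncard < X.ncard := Set.ncard_lt_ncard hss (Set.toFinite X)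
            constructor
            · omega
            · refine le_trans hqinv ?_
              apply mul_le_mul_of_nonneg_left _ hQ20
              apply wsum_mono hmu0
              exact Set.diff_subset_diff_right (Set.union_subset_union_left C hXsub)
      · -- CARVE : cut the annulus, the ball is small
        have hAsubX : annulus G X v r ⊆ X := fun x hx => hballX (r+1) hx.1
        have hCA : C ∩ annulus G X v r = ∅ := by
          ext x
          simp only [Set.mem_inter_iff, Set.mem_empty_iff_false, iff_false, not_and]
          intro hxC hxA
          exact hXC x (hAsubX hxA) hxC
        have hqsplit : wsum q (C ∪ annulus G X v r) = wsum q C + wsum q (annulus G X v r) :=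
          wsum_union_disjoint hCA
        have hq2mu : wsum q (annulus G X v r) ≤
            2*(∑ x : V, q x)*(wsum (mu q (Fintype.card V)) (annulus G X v r)) := by
          have h1 := wsum_le_wsum (fun x => q_le_mu (n := Fintype.card V) hq x) (annulus G X v r)
          rwa [wsum_smul] at h1
        have hballreg : Region G ((C ∪ annulus G X v r) ∪ SupL BS) (ball G X v r) := by
          have h0 := ball_region hreg hv r
          have hEq : (C ∪ annulus G X v r) ∪ SupL BS = (C ∪ SupL BS) ∪ annulus G X v r := by
            ext x; simp only [Set.mem_union]; tauto
          rw [hEq]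
          exact h0
        have hCdisj' : (C ∪ annulus G X v r) ∩ SupL BS = ∅ := by
          ext x
          simp only [Set.mem_inter_iff, Set.mem_union, Set.mem_empty_iff_false, iff_false,
            not_and]
          rintro (hxC | hxA) hxS
          · have : x ∈ C ∩ SupL BS := ⟨hxC, hxS⟩
            rw [hCdisj] at this; exact this
          · exact hXS x (hAsubX hxA) hxS
        have hwb : 8*ℓ*(wsum q (C ∪ annulus G X v r)) ≤
            2*(∑ x : V, q x)*(wsum (mu q (Fintype.card V)) (Set.univ \ (X ∪ C))
              + wsum (mu q (Fintype.card V)) (ball G X v r)) := by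
          have e1 : 8*(ℓ:ℚ)*(wsum q (annulus G X v r)) ≤
              8*ℓ*(2*(∑ x : V, q x)*(wsum (mu q (Fintype.card V)) (annulus G X v r))) :=
            mul_le_mul_of_nonneg_left hq2mu (by positivity)
          have e2 : 2*(∑ x : V, q x)*(8*ℓ*(wsum (mu q (Fintype.card V)) (annulus G X v r))) ≤
              2*(∑ x : V, q x)*(wsum (mu q (Fintype.card V)) (ball G X v r)) :=
            mul_le_mul_of_nonneg_left hlight hQ20
          rw [hqsplit]
          nlinarith [hqinv]
        have hUdisj : (Set.univ \ (X ∪ C)) ∩ ball G X v r = ∅ := by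
          ext x
          simp only [Set.mem_inter_iff, Set.mem_diff, Set.mem_empty_iff_false, iff_false,
            not_and, Set.mem_univ, true_and, Set.mem_union]
          intro hx hxb
          exact hx (Or.inl (hballX r hxb))
        have hUsum : wsum (mu q (Fintype.card V)) ((Set.univ \ (X ∪ C)) ∪ ball G X v r)
            = wsum (mu q (Fintype.card V)) (Set.univ \ (X ∪ C))
              + wsum (mu q (Fintype.card V)) (ball G X v r) := wsum_union_disjoint hUdisj
        apply finish_step hq hℓ d ih (C ∪ annulus G X v r) BS hpair hbr hsize hlen hCdisj'
        · have hsub1 : wsum (mu q (Fintype.card V)) ((Set.univ \ (X ∪ C)) ∪ ball G X v r) ≤ 1 :=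
            le_trans (wsum_mono hmu0 (Set.subset_univ _)) hmuuniv
          rw [hUsum] at hsub1
          have := mul_le_mul_of_nonneg_left hsub1 hQ20
          linarith
        · intro X' hX'reg hX'big
          have hTT : C ∪ SupL BS ⊆ (C ∪ annulus G X v r) ∪ SupL BS :=
            Set.union_subset_union_left (SupL BS) Set.subset_union_left
          have hXsub : X' ⊆ X := big_region_subset hreg hX'reg hTT hbig hX'big
          have hdisjball : X' ∩ ball G X v r = ∅ := by
            rcases hX'reg.eq_or_disjoint hballreg with h | h
            · exfalso
              rw [h] at hX'big
              omega
            · exact h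
          have hvX' : v ∉ X' := by
            intro h
            have : v ∈ X' ∩ ball G X v r := ⟨h, mem_ball_self r⟩
            rw [hdisjball] at this
            exact this
          have hss : X' ⊂ X := by
            rw [Set.ssubset_def]
            exact ⟨hXsub, fun h => hvX' (h hv)⟩
          have hlt : X'.ncard < X.ncard := Set.ncard_lt_ncard hss (Set.toFinite X)
          constructor
          · omega
          · have hsubset : (Set.univ \ (X ∪ C)) ∪ ball G X v r ⊆
                Set.univ \ (X' ∪ (C ∪ annulus G X v r)) := by
              intro x hx
              refine ⟨trivial, ?_⟩
              intro hmem
              rcases hx with ⟨-, hx⟩ | hx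
              · rcases hmem with h | h | h
                · exact hx (Or.inl (hXsub h))
                · exact hx (Or.inr h)
                · exact hx (Or.inl (hAsubX h))
              · rcases hmem with h | h | h
                · have : x ∈ X' ∩ ball G X v r := ⟨h, hx⟩
                  rw [hdisjball] at this; exact this
                · exact hXC x (hballX r hx) h
                · have : x ∈ ball G X v r ∩ annulus G X v r := ⟨hx, h⟩
                  rw [ball_inter_annulus] at this; exact this
            refine le_trans hwb ?_
            apply mul_le_mul_of_nonneg_left _ hQ20
            rw [← hUsum]
            exact wsum_mono hmu0 hsubset
      · -- REFOCUS : cut the annulus, the ball is big, recurse into the ball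
        have hAsubX : annulus G X v r ⊆ X := fun x hx => hballX (r+1) hx.1
        have hCA : C ∩ annulus G X v r = ∅ := by
          ext x
          simp only [Set.mem_inter_iff, Set.mem_empty_iff_false, iff_false, not_and]
          intro hxC hxA
          exact hXC x (hAsubX hxA) hxC
        have hqsplit : wsum q (C ∪ annulus G X v r) = wsum q C + wsum q (annulus G X v r) :=
          wsum_union_disjoint hCA
        have hq2mu : wsum q (annulus G X v r) ≤
            2*(∑ x : V, q x)*(wsum (mu q (Fintype.card V)) (annulus G X v r)) := by
          have h1 := wsum_le_wsum (fun x => q_le_mu (n := Fintype.card V) hq x) (annulus G X v r)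
          rwa [wsum_smul] at h1
        have hballreg : Region G ((C ∪ annulus G X v r) ∪ SupL BS) (ball G X v r) := by
          have h0 := ball_region hreg hv r
          have hEq : (C ∪ annulus G X v r) ∪ SupL BS = (C ∪ SupL BS) ∪ annulus G X v r := by
            ext x; simp only [Set.mem_union]; tauto
          rw [hEq]
          exact h0
        have hCdisj' : (C ∪ annulus G X v r) ∩ SupL BS = ∅ := by
          ext x
          simp only [Set.mem_inter_iff, Set.mem_union, Set.mem_empty_iff_false, iff_false,
            not_and]
          rintro (hxC | hxA) hxS
          · have : x ∈ C ∩ SupL BS := ⟨hxC, hxS⟩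
            rw [hCdisj] at this; exact this
          · exact hXS x (hAsubX hxA) hxS
        have hwb : 8*ℓ*(wsum q (C ∪ annulus G X v r)) ≤
            2*(∑ x : V, q x)*(wsum (mu q (Fintype.card V)) (Set.univ \ (X ∪ C))
              + wsum (mu q (Fintype.card V)) (X \ ball G X v (r+1))) := by
          have e1 : 8*(ℓ:ℚ)*(wsum q (annulus G X v r)) ≤
              8*ℓ*(2*(∑ x : V, q x)*(wsum (mu q (Fintype.card V)) (annulus G X v r))) :=
            mul_le_mul_of_nonneg_left hq2mu (by positivity)
          have e2 : 2*(∑ x : V, q x)*(8*ℓ*(wsum (mu q (Fintype.card V)) (annulus G X v r))) ≤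
              2*(∑ x : V, q x)*(wsum (mu q (Fintype.card V)) (X \ ball G X v (r+1))) :=
            mul_le_mul_of_nonneg_left hlight hQ20
          rw [hqsplit]
          nlinarith [hqinv]
        have hUdisj : (Set.univ \ (X ∪ C)) ∩ (X \ ball G X v (r+1)) = ∅ := by
          ext x
          simp only [Set.mem_inter_iff, Set.mem_diff, Set.mem_empty_iff_false, iff_false,
            Set.mem_univ, true_and, Set.mem_union]
          tauto
        have hUsum : wsum (mu q (Fintype.card V)) ((Set.univ \ (X ∪ C)) ∪ (X \ ball G X v (r+1)))
            = wsum (mu q (Fintype.card V)) (Set.univ \ (X ∪ C))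
              + wsum (mu q (Fintype.card V)) (X \ ball G X v (r+1)) := wsum_union_disjoint hUdisj
        apply finish_step hq hℓ d ih (C ∪ annulus G X v r) BS hpair hbr hsize hlen hCdisj'
        · have hsub1 : wsum (mu q (Fintype.card V))
              ((Set.univ \ (X ∪ C)) ∪ (X \ ball G X v (r+1))) ≤ 1 :=
            le_trans (wsum_mono hmu0 (Set.subset_univ _)) hmuuniv
          rw [hUsum] at hsub1
          have := mul_le_mul_of_nonneg_left hsub1 hQ20
          linarith
        · intro X' hX'reg hX'big
          have hXeqball : X' = ball G X v r := by
            rcases hX'reg.eq_or_disjoint hballreg with h | h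
            · exact h
            · exfalso
              have hdisj : Disjoint X' (ball G X v r) := Set.disjoint_iff_inter_eq_empty.mpr h
              have hsum : X'.ncard + (ball G X v r).ncard = (X' ∪ ball G X v r).ncard :=
                (Set.ncard_union_eq hdisj (Set.toFinite _) (Set.toFinite _)).symm
              have hle := ncard_le_card (X' ∪ ball G X v r)
              omega
          -- the ball is strictly smaller than X
          have hexz : ∃ z ∈ X, z ∉ ball G X v r := by
            have hnt : ∃ b ∈ BS, ¬ touches G b (ball G X v r) := by
              push_neg at hnNb
              exact hnNb
            obtain ⟨b, hb, hnt⟩ := hnt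
            obtain ⟨y, hy, x, hx, hadj⟩ := htouch b hb
            by_contra h
            push_neg at h
            exact hnt ⟨y, hy, x, h x hx, hadj⟩
          obtain ⟨z, hzX, hzb⟩ := hexz
          have hss : ball G X v r ⊂ X := by
            rw [Set.ssubset_def]
            exact ⟨hballX r, fun h => hzb (h hzX)⟩
          have hlt : (ball G X v r).ncard < X.ncard := Set.ncard_lt_ncard hss (Set.toFinite X)
          constructor
          · rw [hXeqball]; omega
          · have hsubset : (Set.univ \ (X ∪ C)) ∪ (X \ ball G X v (r+1)) ⊆
                Set.univ \ (X' ∪ (C ∪ annulus G X v r)) := by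
              rw [hXeqball]
              intro x hx
              refine ⟨trivial, ?_⟩
              intro hmem
              rcases hx with ⟨-, hx⟩ | hx
              · rcases hmem with h | h | h
                · exact hx (Or.inl (hballX r h))
                · exact hx (Or.inr h)
                · exact hx (Or.inl (hAsubX h))
              · rcases hmem with h | h | h
                · exact hx.2 (ball_subset_succ r h)
                · exact hXC x hx.1 h
                · exact hx.2 h.1
            refine le_trans hwb ?_
            apply mul_le_mul_of_nonneg_left _ hQ20
            rw [← hUsum]
            exact wsum_mono hmu0 hsubset


/-! ### Entry point -/

lemma entry {q : V → ℚ} {ℓ m₀ : ℕ} (hq : ∀ x, 0 ≤ q x) (hℓ : 1 ≤ ℓ) (hm₀ : 1 ≤ m₀)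
    (d : ℕ) (hd : d = 2*(8*ℓ*(Nat.clog 2 (Fintype.card V + 1)+1))+4) :
    GoalP G q ℓ m₀ d := by
  have hQ0 : (0:ℚ) ≤ ∑ x : V, q x := Qtot_nonneg hq
  by_cases hbigex : ∃ X, Region G ((∅ : Set V) ∪ SupL ([] : List (Set V))) X ∧
      2*(Fintype.card V) < 3*X.ncard
  · obtain ⟨X, hXreg, hXbig⟩ := hbigex
    refine main_loop hq hℓ d hd X.ncard ∅ [] X le_rfl hXreg hXbig List.Pairwise.nil
      (by simp) (by simp) (by simp) (by simp only [List.length_nil]; omega)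
      (by simp [SupL_nil]) ?_
    rw [wsum_empty, mul_zero]
    have h1 : 0 ≤ wsum (mu q (Fintype.card V)) (Set.univ \ (X ∪ ∅)) :=
      wsum_nonneg (mu_nonneg hq) _
    nlinarith
  · push_neg at hbigex
    refine conclude d hq hℓ ∅ [] List.Pairwise.nil (by simp) (by simp) (by simp)
      (by simp [SupL_nil]) ?_ ?_
    · rw [wsum_empty, mul_zero]
      linarith
    · intro X hX
      have := hbigex X hX
      omega

end PRSaux

/-- weighted Plotkin–Rao–Smith, Theorem 4. -/
theorem stmt7 :
    ∃ (a : ℝ) (d : ℕ → ℕ → ℕ), 0 < a ∧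
      (∀ ℓ ℓ' n n' : ℕ, ℓ ≤ ℓ' → n ≤ n' → d ℓ n ≤ d ℓ' n') ∧
      (∀ ℓ n : ℕ, 1 ≤ ℓ → 1 ≤ n → (d ℓ n : ℝ) ≤ a * ℓ * Real.logb 2 (n + 1)) ∧
      (∀ (V : Type) [Fintype V] (G : SimpleGraph V) (n ℓ m₀ : ℕ) (q : V → ℚ),
        Fintype.card V = n → 1 ≤ ℓ → 1 ≤ m₀ → (∀ v, 0 ≤ q v) →
        (∃ M : CliqueModel G m₀ (d ℓ n), M.Bounded m₀) ∨
        (∃ (C M : Finset V) (m : ℕ) (Mod : CliqueModel G m (d ℓ n)),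
          Disjoint C M ∧
          IsBalancedSeparator G (↑C ∪ ↑M) ∧
          (∑ v ∈ C, q v) ≤ (∑ v, q v) / (ℓ : ℚ) ∧
          m ≤ min m₀ (omegaDepth G (d ℓ n)) ∧
          Mod.support = ↑M ∧
          Mod.Bounded (min m₀ (omegaDepth G (d ℓ n))))) := by
  refine ⟨100, fun ℓ n => 2*(8*ℓ*(Nat.clog 2 (n+1)+1))+4, by norm_num, ?_, ?_, ?_⟩
  · intro ℓ ℓ' n n' hℓ hn
    have h1 : Nat.clog 2 (n+1) ≤ Nat.clog 2 (n'+1) := Nat.clog_mono_right 2 (by omega)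
    have h2 : 8*ℓ*(Nat.clog 2 (n+1)+1) ≤ 8*ℓ'*(Nat.clog 2 (n'+1)+1) :=
      Nat.mul_le_mul (Nat.mul_le_mul_left 8 hℓ) (by omega)
    exact Nat.add_le_add (Nat.mul_le_mul_left 2 h2) le_rfl
  · intro ℓ n hℓ hn
    set c := Nat.clog 2 (n+1) with hc
    have hc1 : 1 ≤ c := Nat.clog_pos one_lt_two (by omega)
    set L := Real.logb 2 (n+1) with hL
    have hL1 : (1:ℝ) ≤ L := by
      rw [hL]
      have := Real.logb_self_eq_one (b := 2) (by norm_num)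
      rw [← this]
      apply Real.logb_le_logb_of_le (by norm_num) (by norm_num)
      have : (1:ℝ) ≤ (n:ℝ) := by exact_mod_cast hn
      linarith
    have hclog : (c:ℝ) ≤ L + 1 := by
      have hpow : 2^(c-1) < n+1 := by
        have := Nat.pow_pred_clog_lt_self (b := 2) one_lt_two (x := n+1) (by omega)
        simpa [hc, Nat.pred_eq_sub_one] using this
      have hpowR : (2:ℝ)^(c-1) < (n:ℝ)+1 := by exact_mod_cast hpow
      have hlog : ((c:ℕ)-1 : ℕ) ≤ L := by
        have h1 : Real.logb 2 ((2:ℝ)^(c-1)) ≤ L := by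
          rw [hL]
          apply Real.logb_le_logb_of_le (by norm_num) (by positivity)
          push_cast
          linarith
        rwa [Real.logb_pow, Real.logb_self_eq_one (by norm_num), mul_one] at h1
      have hcast : ((c - 1 : ℕ) : ℝ) = (c:ℝ) - 1 := by
        have : (1:ℕ) ≤ c := hc1
        push_cast [Nat.cast_sub this]
        ring
      rw [hcast] at hlog
      linarith
    have hlR : (1:ℝ) ≤ (ℓ:ℝ) := by exact_mod_cast hℓ
    have h3L : (c:ℝ) + 1 ≤ 3*L := by linarith
    have hA : 16*(ℓ:ℝ)*((c:ℝ)+1) ≤ 16*(ℓ:ℝ)*(3*L) :=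
      mul_le_mul_of_nonneg_left h3L (by positivity)
    have hB : (1:ℝ) ≤ (ℓ:ℝ)*L := by nlinarith
    push_cast
    nlinarith
  · intro V _ G n ℓ m₀ q hcard hℓ hm₀ hq
    exact PRSaux.entry (G := G) hq hℓ hm₀ (2*(8*ℓ*(Nat.clog 2 (n+1)+1))+4) (by rw [hcard])
end
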